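/- arXiv:1908.06396 — 6 statements merged into one kernel-verified Lean document; each statement's English description precedes it below -/
import Mathlib

section
/- Let Ω be a bounded open convex domain in ℝⁿ (n ≥ 2), let γ ∈ (0,1] and M > 0, and let u be continuous on the closure of Ω, convex on Ω, with u = 0 on ∂Ω. If |u(x)| ≤ M·d_x^γ for all x ∈ Ω, then u is γ-Hölder continuous on the closure of Ω; more precisely, |u(x) − u(y)| ≤ M·|x − y|^γ for all x, y in the closure of Ω, and sup_{closure Ω} |u| ≤ M·(diam Ω)^γ, so the C^γ-norm of u on the closure of Ω is at most M·(1 + (diam Ω)^γ). -/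
open Filter Set Topology

/-- Convexity inequality extends to a closure point via continuity. -/
lemma convexOn_combo_closure {E : Type*} [NormedAddCommGroup E] [NormedSpace ℝ E]
    {s : Set E} (hsopen : IsOpen s) (hsconv : Convex ℝ s)
    {u : E → ℝ} (hconv : ConvexOn ℝ s u) (hcont : ContinuousOn u (closure s))
    {y z : E} (hy : y ∈ s) (hz : z ∈ closure s) {t : ℝ} (ht0 : 0 ≤ t) (ht1 : t ≤ 1) :
    u ((1 - t) • y + t • z) ≤ (1 - t) * u y + t * u z := by
  set l : Filter ℝ := 𝓝[>] (0:ℝ) with hl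
  set zc : ℝ → E := fun c => c • y + (1 - c) • z with hzc
  have hmemIoc : Set.Ioc (0:ℝ) 1 ∈ l := Ioc_mem_nhdsGT_of_mem (by norm_num)
  have hzmem : ∀ c ∈ Set.Ioc (0:ℝ) 1, zc c ∈ s := by
    intro c hc
    rw [← hsopen.interior_eq]
    exact hsconv.combo_interior_closure_mem_interior (by rwa [hsopen.interior_eq]) hz hc.1
      (by linarith [hc.2]) (by ring)
  have hineq : ∀ c ∈ Set.Ioc (0:ℝ) 1,
      u ((1 - t) • y + t • zc c) ≤ (1 - t) * u y + t * u (zc c) := by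
    intro c hc
    exact hconv.2 hy (hzmem c hc) (by linarith) ht0 (by ring)
  have hycl : y ∈ closure s := subset_closure hy
  have hx₀ : (1 - t) • y + t • z ∈ closure s :=
    hsconv.closure hycl hz (by linarith) ht0 (by ring)
  have hzc_tendsto : Tendsto zc l (𝓝[closure s] z) := by
    rw [tendsto_nhdsWithin_iff]
    constructor
    · have hcont' : Continuous zc := by fun_prop
      have := hcont'.tendsto 0
      simp only [hzc, zero_smul, sub_zero, one_smul, zero_add] at this
      exact this.mono_left nhdsWithin_le_nhds
    · exact Filter.eventually_of_mem hmemIoc fun c hc => subset_closure (hzmem c hc)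
  have hq_tendsto : Tendsto (fun c => (1 - t) • y + t • zc c) l
      (𝓝[closure s] ((1 - t) • y + t • z)) := by
    rw [tendsto_nhdsWithin_iff]
    constructor
    · have hcont' : Continuous (fun c => (1 - t) • y + t • zc c) := by fun_prop
      have := hcont'.tendsto 0
      simp only [hzc, zero_smul, sub_zero, one_smul, zero_add] at this
      exact this.mono_left nhdsWithin_le_nhds
    · refine Filter.eventually_of_mem hmemIoc fun c hc => subset_closure ?_
      exact hsconv hy (hzmem c hc) (by linarith) ht0 (by ring)
  have hF : Tendsto (fun c => u ((1 - t) • y + t • zc c)) l (𝓝 (u ((1 - t) • y + t • z))) :=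
    (hcont _ hx₀).tendsto.comp hq_tendsto
  have hG : Tendsto (fun c => (1 - t) * u y + t * u (zc c)) l
      (𝓝 ((1 - t) * u y + t * u z)) :=
    tendsto_const_nhds.add (tendsto_const_nhds.mul ((hcont z hz).tendsto.comp hzc_tendsto))
  exact le_of_tendsto_of_tendsto hF hG (Filter.eventually_of_mem hmemIoc hineq)

/-- Lemma 2.1: a convex function vanishing on the boundary with a power-of-distance
bound is Hölder continuous on the closure of the domain. -/
theorem convex_dist_power_bound_implies_holder
    (n : ℕ) (hn : 2 ≤ n)
    (Ω : Set (EuclideanSpace ℝ (Fin n)))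
    (hΩopen : IsOpen Ω) (hΩconv : Convex ℝ Ω)
    (hΩbdd : Bornology.IsBounded Ω) (hΩne : Ω.Nonempty)
    (γ M : ℝ) (hγ : γ ∈ Set.Ioc (0 : ℝ) 1) (hM : 0 < M)
    (u : EuclideanSpace ℝ (Fin n) → ℝ)
    (hu_cont : ContinuousOn u (closure Ω))
    (hu_conv : ConvexOn ℝ Ω u)
    (hu_bdry : ∀ x ∈ frontier Ω, u x = 0)
    (hu_bound : ∀ x ∈ Ω, |u x| ≤ M * Metric.infDist x (frontier Ω) ^ γ) :
    (∀ x ∈ closure Ω, ∀ y ∈ closure Ω, |u x - u y| ≤ M * ‖x - y‖ ^ γ) ∧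
      (∀ x ∈ closure Ω, |u x| ≤ M * Metric.diam Ω ^ γ) := by
  obtain ⟨C, hC⟩ := isBounded_iff_forall_norm_le.mp hΩbdd.closure
  have hγ0 : 0 < γ := hγ.1
  have hγ1 : γ ≤ 1 := hγ.2
  -- Step 1: one-sided estimate for interior points
  have key : ∀ x ∈ Ω, ∀ y ∈ Ω, u x - u y ≤ M * ‖x - y‖ ^ γ := by
    intro x hx y hy
    rcases eq_or_ne x y with rfl | hxy
    · simp [Real.zero_rpow (ne_of_gt hγ0)]
    have hd : (0:ℝ) < ‖x - y‖ := by
      rw [norm_pos_iff]; exact sub_ne_zero.mpr hxy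
    set f : ℝ → EuclideanSpace ℝ (Fin n) := fun s => y + s • (x - y) with hf
    set S : Set ℝ := {s : ℝ | f s ∈ closure Ω} with hS
    have h1S : (1:ℝ) ∈ S := by
      simp only [hS, hf, Set.mem_setOf_eq, one_smul, add_sub_cancel]
      exact subset_closure hx
    have hSclosed : IsClosed S := by
      have hcf : Continuous f := by fun_prop
      exact isClosed_closure.preimage hcf
    have hSbdd : BddAbove S := by
      refine ⟨(C + ‖y‖) / ‖x - y‖, fun s hs => ?_⟩
      rw [le_div_iff₀ hd]
      have h1 : ‖f s - y‖ = |s| * ‖x - y‖ := by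
        simp [hf, norm_smul, Real.norm_eq_abs]
      have h2 : ‖f s - y‖ ≤ ‖f s‖ + ‖y‖ := norm_sub_le _ _
      have h3 : ‖f s‖ ≤ C := hC _ hs
      nlinarith [le_abs_self s, abs_nonneg s, hd]
    set τ := sSup S with hτ
    have hτS : τ ∈ S := hSclosed.csSup_mem ⟨1, h1S⟩ hSbdd
    have hτ1 : 1 ≤ τ := le_csSup hSbdd h1S
    set z := f τ with hz
    have hzcl : z ∈ closure Ω := hτS
    have hznΩ : z ∉ Ω := by
      intro hzΩ
      have hcf : Continuous f := by fun_prop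
      have hmem : f ⁻¹' Ω ∈ 𝓝 τ := hcf.continuousAt.preimage_mem_nhds (hΩopen.mem_nhds hzΩ)
      obtain ⟨ε, hε, hball⟩ := Metric.mem_nhds_iff.mp hmem
      have hτε : τ + ε / 2 ∈ S := by
        have : τ + ε / 2 ∈ Metric.ball τ ε := by
          rw [Metric.mem_ball, Real.dist_eq, show τ + ε / 2 - τ = ε / 2 by ring,
            abs_of_pos (by linarith)]
          linarith
        exact subset_closure (hball this)
      have := le_csSup hSbdd hτε
      linarith
    have hzfr : z ∈ frontier Ω := by
      rw [hΩopen.frontier_eq]; exact ⟨hzcl, hznΩ⟩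
    have hτgt : 1 < τ := by
      rcases hτ1.lt_or_eq with h | h
      · exact h
      · exfalso; apply hznΩ
        rw [hz, ← h, hf]; simpa using hx
    have hτ0 : (0:ℝ) < τ := by linarith
    set t := τ⁻¹ with htdef
    have ht0 : 0 < t := inv_pos.mpr hτ0
    have ht1 : t < 1 := by
      rw [htdef]
      exact inv_lt_one_of_one_lt₀ hτgt
    have hzy : z - y = τ • (x - y) := by simp [hz, hf]
    have htzy : t • (z - y) = x - y := by
      rw [hzy, smul_smul, htdef, inv_mul_cancel₀ (ne_of_gt hτ0), one_smul]
    have hxcombo : x = (1 - t) • y + t • z := by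
      have : (1 - t) • y + t • z = y + t • (z - y) := by
        rw [smul_sub, sub_smul, one_smul]; abel
      rw [this, htzy]; abel
    have hnorm : ‖x - y‖ = t * ‖z - y‖ := by
      rw [← htzy, norm_smul, Real.norm_eq_abs, abs_of_pos ht0]
    have hux : u x ≤ (1 - t) * u y + t * u z := by
      rw [hxcombo]
      exact convexOn_combo_closure hΩopen hΩconv hu_conv hu_cont hy hzcl ht0.le ht1.le
    have huz : u z = 0 := hu_bdry z hzfr
    have hdy : Metric.infDist y (frontier Ω) ≤ ‖z - y‖ := by
      have h := Metric.infDist_le_dist_of_mem (x := y) hzfr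
      rwa [dist_eq_norm, norm_sub_rev] at h
    have hdy0 : 0 ≤ Metric.infDist y (frontier Ω) := Metric.infDist_nonneg
    have h3 : Metric.infDist y (frontier Ω) ^ γ ≤ ‖z - y‖ ^ γ :=
      Real.rpow_le_rpow hdy0 hdy hγ0.le
    have h4 : t ≤ t ^ γ := by
      have := Real.rpow_le_rpow_of_exponent_ge ht0 ht1.le hγ1
      rwa [Real.rpow_one] at this
    have h1 : u x - u y ≤ t * |u y| := by
      have habs : -u y ≤ |u y| := neg_le_abs _
      nlinarith [huz, hux]
    have h2 : t * |u y| ≤ t * (M * Metric.infDist y (frontier Ω) ^ γ) :=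
      mul_le_mul_of_nonneg_left (hu_bound y hy) ht0.le
    have hzy0 : 0 ≤ ‖z - y‖ := norm_nonneg _
    have h5 : t * (M * Metric.infDist y (frontier Ω) ^ γ) ≤ M * (t ^ γ * ‖z - y‖ ^ γ) := by
      have hrp : 0 ≤ Metric.infDist y (frontier Ω) ^ γ := Real.rpow_nonneg hdy0 γ
      have ht' : 0 ≤ t ^ γ := Real.rpow_nonneg ht0.le γ
      have hmul : t * Metric.infDist y (frontier Ω) ^ γ ≤ t ^ γ * ‖z - y‖ ^ γ :=
        mul_le_mul h4 h3 hrp ht'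
      calc t * (M * Metric.infDist y (frontier Ω) ^ γ)
          = M * (t * Metric.infDist y (frontier Ω) ^ γ) := by ring
        _ ≤ M * (t ^ γ * ‖z - y‖ ^ γ) := mul_le_mul_of_nonneg_left hmul hM.le
    have h6 : M * (t ^ γ * ‖z - y‖ ^ γ) = M * ‖x - y‖ ^ γ := by
      rw [hnorm, Real.mul_rpow ht0.le hzy0]
    linarith
  -- Step 2: two-sided estimate for interior points
  have key2 : ∀ x ∈ Ω, ∀ y ∈ Ω, |u x - u y| ≤ M * ‖x - y‖ ^ γ := by
    intro x hx y hy
    rw [abs_sub_le_iff]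
    refine ⟨key x hx y hy, ?_⟩
    have := key y hy x hx
    rwa [norm_sub_rev] at this
  -- Step 3: extend to the closure by continuity
  have hrpow_cont : ∀ (y : EuclideanSpace ℝ (Fin n)),
      Continuous (fun x' : EuclideanSpace ℝ (Fin n) => M * ‖x' - y‖ ^ γ) := by
    intro y
    have h1 : Continuous (fun x' : EuclideanSpace ℝ (Fin n) => ‖x' - y‖) := by fun_prop
    refine continuous_const.mul (continuous_iff_continuousAt.mpr fun x => ?_)
    exact (Real.continuousAt_rpow_const _ _ (Or.inr hγ0.le)).comp h1.continuousAt
  have keyc1 : ∀ y ∈ Ω, ∀ x ∈ closure Ω, |u x - u y| ≤ M * ‖x - y‖ ^ γ := by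
    intro y hy x hx
    have hne : (𝓝[Ω] x).NeBot := mem_closure_iff_nhdsWithin_neBot.mp hx
    have hF : Tendsto (fun x' => |u x' - u y|) (𝓝[Ω] x) (𝓝 |u x - u y|) := by
      have h1 : Tendsto u (𝓝[Ω] x) (𝓝 (u x)) :=
        ((hu_cont x hx).tendsto).mono_left (nhdsWithin_mono x subset_closure)
      exact (h1.sub tendsto_const_nhds).abs
    have hG : Tendsto (fun x' => M * ‖x' - y‖ ^ γ) (𝓝[Ω] x) (𝓝 (M * ‖x - y‖ ^ γ)) :=
      ((hrpow_cont y).tendsto x).mono_left nhdsWithin_le_nhds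
    refine le_of_tendsto_of_tendsto hF hG ?_
    exact Filter.eventually_of_mem self_mem_nhdsWithin fun x' hx' => key2 x' hx' y hy
  have keyc : ∀ x ∈ closure Ω, ∀ y ∈ closure Ω, |u x - u y| ≤ M * ‖x - y‖ ^ γ := by
    intro x hx y hy
    have hne : (𝓝[Ω] y).NeBot := mem_closure_iff_nhdsWithin_neBot.mp hy
    have hF : Tendsto (fun y' => |u x - u y'|) (𝓝[Ω] y) (𝓝 |u x - u y|) := by
      have h1 : Tendsto u (𝓝[Ω] y) (𝓝 (u y)) :=
        ((hu_cont y hy).tendsto).mono_left (nhdsWithin_mono y subset_closure)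
      exact (tendsto_const_nhds.sub h1).abs
    have hG : Tendsto (fun y' => M * ‖x - y'‖ ^ γ) (𝓝[Ω] y) (𝓝 (M * ‖x - y‖ ^ γ)) := by
      have h1 : Continuous (fun y' : EuclideanSpace ℝ (Fin n) => ‖x - y'‖) := by fun_prop
      have h2 : Continuous (fun y' : EuclideanSpace ℝ (Fin n) => M * ‖x - y'‖ ^ γ) := by
        refine continuous_const.mul (continuous_iff_continuousAt.mpr fun w => ?_)
        exact (Real.continuousAt_rpow_const _ _ (Or.inr hγ0.le)).comp h1.continuousAt
      exact (h2.tendsto y).mono_left nhdsWithin_le_nhds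
    refine le_of_tendsto_of_tendsto hF hG ?_
    exact Filter.eventually_of_mem self_mem_nhdsWithin fun y' hy' => keyc1 y' hy' x hx
  refine ⟨keyc, ?_⟩
  -- frontier is nonempty
  have hΩne_univ : Ω ≠ Set.univ := by
    intro h
    set i : Fin n := ⟨0, by omega⟩
    set v : EuclideanSpace ℝ (Fin n) := EuclideanSpace.single i (C + 1) with hv
    have hvΩ : v ∈ closure Ω := by rw [h]; simp
    have := hC v hvΩ
    rw [hv, EuclideanSpace.norm_single] at this
    have hC0 : 0 ≤ C := le_trans (norm_nonneg _) (hC _ (subset_closure hΩne.choose_spec))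
    rw [Real.norm_eq_abs, abs_of_pos (by linarith)] at this
    linarith
  obtain ⟨z₀, hz₀⟩ := nonempty_frontier_iff.mpr ⟨hΩne, hΩne_univ⟩
  intro x hx
  have hz₀cl : z₀ ∈ closure Ω := frontier_subset_closure hz₀
  have h1 : |u x| = |u x - u z₀| := by rw [hu_bdry z₀ hz₀, sub_zero]
  have h2 := keyc x hx z₀ hz₀cl
  have h3 : ‖x - z₀‖ ≤ Metric.diam Ω := by
    rw [← Metric.diam_closure, ← dist_eq_norm]
    exact Metric.dist_le_diam_of_mem hΩbdd.closure hx hz₀cl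
  have h4 : ‖x - z₀‖ ^ γ ≤ Metric.diam Ω ^ γ :=
    Real.rpow_le_rpow (norm_nonneg _) h3 hγ0.le
  rw [h1]
  calc |u x - u z₀| ≤ M * ‖x - z₀‖ ^ γ := h2
    _ ≤ M * Metric.diam Ω ^ γ := by nlinarith
end

section
/- Let n ≥ 2, M > 0, N > 0, l > 0, γ > 0, and define W : ℝⁿ → ℝ by W(x) = −M·x_n^γ·√(N²l² − |x'|²), where x = (x', x_n) ∈ ℝ^{n−1} × ℝ and |x'| is the Euclidean norm of x'. Then at every point x with x_n > 0 and |x'| < N·l one has det D²W(x) = Mⁿ·N²·l²·γ·x_n^{nγ−2}·(N²l² − |x'|²)^{−n/2}·[1 − (1 + |x'|²/(N²l²))·γ], where det D²W denotes the determinant of the Hessian matrix of W. -/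
/-- The determinant of the Hessian matrix of `u` at `x`. -/
noncomputable def hessianDet {n : ℕ} (u : EuclideanSpace ℝ (Fin n) → ℝ)
    (x : EuclideanSpace ℝ (Fin n)) : ℝ :=
  (Matrix.of fun i j : Fin n =>
    iteratedFDeriv ℝ 2 u x ![EuclideanSpace.single i (1 : ℝ), EuclideanSpace.single j (1 : ℝ)]).det

/-- The last coordinate index of `Fin n`. -/
def lastIdx (n : ℕ) (hn : 0 < n) : Fin n := ⟨n - 1, Nat.sub_lt hn one_pos⟩


open Finset

noncomputable section HessAux

variable {n : ℕ} (e : Fin n) (M γ K : ℝ)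

/-- sum of squares of the coordinates other than `e` -/
def Ssq (e : Fin n) (y : EuclideanSpace ℝ (Fin n)) : ℝ := ∑ j ∈ Finset.univ.erase e, y j ^ 2

def Wfn (y : EuclideanSpace ℝ (Fin n)) : ℝ := -M * y e ^ γ * Real.sqrt (K - Ssq e y)

def DS (y : EuclideanSpace ℝ (Fin n)) : EuclideanSpace ℝ (Fin n) →L[ℝ] ℝ :=
  ∑ j ∈ Finset.univ.erase e, y j • (EuclideanSpace.proj j : EuclideanSpace ℝ (Fin n) →L[ℝ] ℝ)

def Lfn (y : EuclideanSpace ℝ (Fin n)) : EuclideanSpace ℝ (Fin n) →L[ℝ] ℝ :=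
  (M * y e ^ γ / Real.sqrt (K - Ssq e y)) • DS e y
    + (-(M * γ) * y e ^ (γ - 1) * Real.sqrt (K - Ssq e y)) •
        (EuclideanSpace.proj e : EuclideanSpace ℝ (Fin n) →L[ℝ] ℝ)

lemma hasFDerivAt_Ssq (y : EuclideanSpace ℝ (Fin n)) :
    HasFDerivAt (Ssq e) ((2:ℝ) • DS e y) y := by
  have h : ∀ j ∈ Finset.univ.erase e,
      HasFDerivAt (fun y : EuclideanSpace ℝ (Fin n) => y j ^ 2)
        ((2 * y j) • (EuclideanSpace.proj j : EuclideanSpace ℝ (Fin n) →L[ℝ] ℝ)) y := by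
    intro j _
    have h2 := (hasDerivAt_pow 2 (y j)).comp_hasFDerivAt y
      ((EuclideanSpace.proj j : EuclideanSpace ℝ (Fin n) →L[ℝ] ℝ).hasFDerivAt)
    simpa [Function.comp_def] using h2
  have h3 := HasFDerivAt.fun_sum h
  show HasFDerivAt (fun y => Ssq e y) _ y
  simpa only [Ssq, DS, Finset.smul_sum, smul_smul] using h3

lemma hasFDerivAt_sqrtpart (y : EuclideanSpace ℝ (Fin n)) (hs : 0 < K - Ssq e y) :
    HasFDerivAt (fun y => Real.sqrt (K - Ssq e y))
      ((1 / (2 * Real.sqrt (K - Ssq e y))) • -((2:ℝ) • DS e y)) y :=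
  ((hasFDerivAt_Ssq e y).const_sub K).sqrt hs.ne'

lemma hasFDerivAt_Wfn (y : EuclideanSpace ℝ (Fin n)) (ht : y e ≠ 0) (hs : 0 < K - Ssq e y) :
    HasFDerivAt (Wfn e M γ K) (Lfn e M γ K y) y := by
  have hr : Real.sqrt (K - Ssq e y) ≠ 0 := (Real.sqrt_pos.mpr hs).ne'
  have h1 : HasFDerivAt (fun y : EuclideanSpace ℝ (Fin n) => y e ^ γ)
      ((γ * y e ^ (γ - 1)) • (EuclideanSpace.proj e : EuclideanSpace ℝ (Fin n) →L[ℝ] ℝ)) y :=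
    HasFDerivAt.rpow_const
      ((EuclideanSpace.proj e : EuclideanSpace ℝ (Fin n) →L[ℝ] ℝ).hasFDerivAt) (Or.inl ht)
  have h4 := h1.const_mul (-M)
  have h5 := h4.mul (hasFDerivAt_sqrtpart e K y hs)
  have heq : ((-M * y e ^ γ) • ((1 / (2 * Real.sqrt (K - Ssq e y))) • -((2:ℝ) • DS e y))
      + Real.sqrt (K - Ssq e y) • ((-M) • ((γ * y e ^ (γ - 1)) •
        (EuclideanSpace.proj e : EuclideanSpace ℝ (Fin n) →L[ℝ] ℝ)))) = Lfn e M γ K y := by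
    ext v
    simp only [Lfn, ContinuousLinearMap.add_apply, ContinuousLinearMap.coe_smul', Pi.smul_apply,
      ContinuousLinearMap.neg_apply, smul_eq_mul]
    field_simp
  rw [← heq]
  exact h5


lemma DS_single (y : EuclideanSpace ℝ (Fin n)) (j : Fin n) :
    DS e y (EuclideanSpace.single j (1:ℝ)) = if j = e then 0 else y j := by
  have h : DS e y (EuclideanSpace.single j (1:ℝ))
      = ∑ k ∈ Finset.univ.erase e, (if k = j then y k else 0) := by
    simp only [DS, ContinuousLinearMap.coe_sum', Finset.sum_apply,
      ContinuousLinearMap.coe_smul', Pi.smul_apply, PiLp.proj_apply,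
      EuclideanSpace.single_apply, smul_eq_mul, mul_ite, mul_one, mul_zero]
  rw [h, Finset.sum_ite_eq' (Finset.univ.erase e) j (fun k => y k)]
  by_cases hj : j = e <;> simp [hj]

lemma Lfn_single (y : EuclideanSpace ℝ (Fin n)) (j : Fin n) :
    Lfn e M γ K y (EuclideanSpace.single j (1:ℝ)) =
      if j = e then -(M * γ) * y e ^ (γ - 1) * Real.sqrt (K - Ssq e y)
      else M * y e ^ γ / Real.sqrt (K - Ssq e y) * y j := by
  by_cases hj : j = e
  · simp [Lfn, hj, DS_single, ContinuousLinearMap.add_apply, EuclideanSpace.single_apply]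
  · simp [Lfn, hj, DS_single, ContinuousLinearMap.add_apply, EuclideanSpace.single_apply,
      show ¬ e = j from fun h => hj h.symm]

lemma differentiableAt_Lfn (x : EuclideanSpace ℝ (Fin n)) (ht : x e ≠ 0)
    (hs : 0 < K - Ssq e x) : DifferentiableAt ℝ (Lfn e M γ K) x := by
  have hr : Real.sqrt (K - Ssq e x) ≠ 0 := (Real.sqrt_pos.mpr hs).ne'
  have hproj : ∀ j : Fin n, DifferentiableAt ℝ
      (fun y : EuclideanSpace ℝ (Fin n) => y j) x := fun j =>
    (EuclideanSpace.proj j : EuclideanSpace ℝ (Fin n) →L[ℝ] ℝ).differentiableAt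
  have hSd : DifferentiableAt ℝ (fun y => K - Ssq e y) x :=
    (differentiableAt_const K).sub (DifferentiableAt.fun_sum fun j _ => (hproj j).pow 2)
  have hsqrt : DifferentiableAt ℝ (fun y => Real.sqrt (K - Ssq e y)) x := hSd.sqrt hs.ne'
  have hDS : DifferentiableAt ℝ (DS (n := n) e) x :=
    DifferentiableAt.fun_sum fun j _ => (hproj j).smul_const
      (EuclideanSpace.proj j : EuclideanSpace ℝ (Fin n) →L[ℝ] ℝ)
  have h1 : DifferentiableAt ℝ (fun y : EuclideanSpace ℝ (Fin n) =>
      M * y e ^ γ / Real.sqrt (K - Ssq e y)) x :=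
    (((hproj e).rpow_const (Or.inl ht)).const_mul M).mul (hsqrt.inv hr)
  have h2 : DifferentiableAt ℝ (fun y : EuclideanSpace ℝ (Fin n) =>
      (M * y e ^ γ / Real.sqrt (K - Ssq e y)) • DS e y) x := h1.smul hDS
  have h3 : DifferentiableAt ℝ (fun y : EuclideanSpace ℝ (Fin n) =>
      (-(M * γ) * y e ^ (γ - 1) * Real.sqrt (K - Ssq e y)) •
        (EuclideanSpace.proj e : EuclideanSpace ℝ (Fin n) →L[ℝ] ℝ)) x :=
    ((((hproj e).rpow_const (Or.inl ht)).const_mul (-(M * γ))).mul hsqrt).smul_const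
      (EuclideanSpace.proj e : EuclideanSpace ℝ (Fin n) →L[ℝ] ℝ)
  exact h2.add h3


def Hent (x : EuclideanSpace ℝ (Fin n)) (i j : Fin n) : ℝ :=
  if j = e then
    (if i = e then -(M * γ) * (γ - 1) * (x e ^ (γ - 1) / x e) * Real.sqrt (K - Ssq e x)
     else M * γ * x e ^ (γ - 1) * x i / Real.sqrt (K - Ssq e x))
  else
    (if i = e then M * γ * x e ^ (γ - 1) * x j / Real.sqrt (K - Ssq e x)
     else M * x e ^ (γ - 1) * x e * ((if i = j then 1 else 0) / Real.sqrt (K - Ssq e x)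
        + x i * x j / Real.sqrt (K - Ssq e x) ^ 3))

lemma entry (x : EuclideanSpace ℝ (Fin n)) (ht : 0 < x e) (hs : 0 < K - Ssq e x) (i j : Fin n) :
    iteratedFDeriv ℝ 2 (Wfn e M γ K) x
      ![EuclideanSpace.single i (1:ℝ), EuclideanSpace.single j (1:ℝ)] = Hent e M γ K x i j := by
  have htne : x e ≠ 0 := ht.ne'
  have hrpos : 0 < Real.sqrt (K - Ssq e x) := Real.sqrt_pos.mpr hs
  have hr : Real.sqrt (K - Ssq e x) ≠ 0 := hrpos.ne'
  have hScont : Continuous (Ssq (n := n) e) := by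
    apply continuous_finset_sum
    intro j _
    exact ((EuclideanSpace.proj j :
      EuclideanSpace ℝ (Fin n) →L[ℝ] ℝ).continuous).pow 2
  have hopen : IsOpen {y : EuclideanSpace ℝ (Fin n) | 0 < y e ∧ 0 < K - Ssq e y} :=
    (isOpen_lt continuous_const (EuclideanSpace.proj e :
        EuclideanSpace ℝ (Fin n) →L[ℝ] ℝ).continuous).inter
      (isOpen_lt continuous_const (continuous_const.sub hScont))
  have hev : fderiv ℝ (Wfn e M γ K) =ᶠ[nhds x] Lfn e M γ K := by
    filter_upwards [hopen.mem_nhds ⟨ht, hs⟩] with y hy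
    exact (hasFDerivAt_Wfn e M γ K y hy.1.ne' hy.2).fderiv
  rw [iteratedFDeriv_two_apply]
  simp only [Matrix.cons_val_zero, Matrix.cons_val_one, Matrix.head_cons]
  rw [hev.fderiv_eq]
  have hdL := differentiableAt_Lfn e M γ K x htne hs
  have hmain : fderiv ℝ (Lfn e M γ K) x (EuclideanSpace.single i (1:ℝ))
        (EuclideanSpace.single j (1:ℝ))
      = fderiv ℝ (fun y => Lfn e M γ K y (EuclideanSpace.single j (1:ℝ))) x
        (EuclideanSpace.single i (1:ℝ)) := by
    rw [fderiv_clm_apply hdL (differentiableAt_const _)]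
    simp
  rw [hmain]
  by_cases hj : j = e
  · simp only [hj]
    have hfun : (fun y => Lfn e M γ K y (EuclideanSpace.single e (1:ℝ)))
        = fun y : EuclideanSpace ℝ (Fin n) =>
            -(M * γ) * y e ^ (γ - 1) * Real.sqrt (K - Ssq e y) := by
      funext y; rw [Lfn_single]; simp
    rw [hfun]
    have h1 : HasFDerivAt (fun y : EuclideanSpace ℝ (Fin n) => -(M * γ) * y e ^ (γ - 1))
        ((-(M * γ)) • (((γ - 1) * x e ^ (γ - 1 - 1)) •
          (EuclideanSpace.proj e : EuclideanSpace ℝ (Fin n) →L[ℝ] ℝ))) x :=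
      (HasFDerivAt.rpow_const (EuclideanSpace.proj e :
        EuclideanSpace ℝ (Fin n) →L[ℝ] ℝ).hasFDerivAt (Or.inl htne)).const_mul _
    have hG := h1.fun_mul (hasFDerivAt_sqrtpart e K x hs)
    rw [hG.fderiv]
    have hxp : x e ^ (γ - 1 - 1) = x e ^ (γ - 1) / x e := by
      rw [Real.rpow_sub ht (γ - 1) 1, Real.rpow_one]
    simp only [ContinuousLinearMap.add_apply, ContinuousLinearMap.coe_smul', Pi.smul_apply,
      ContinuousLinearMap.neg_apply, smul_eq_mul, DS_single, PiLp.proj_apply,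
      EuclideanSpace.single_apply, Hent, if_pos rfl, ↓reduceIte]
    rw [hxp]
    set r := Real.sqrt (K - Ssq e x) with hrdef
    by_cases hi : i = e
    · simp only [hi, if_pos rfl, ↓reduceIte]
      field_simp
      try ring
      try tauto
    · simp only [if_neg hi, if_neg (show ¬ e = i from fun h => hi h.symm), ↓reduceIte]
      field_simp
      ring
  · have hfun : (fun y => Lfn e M γ K y (EuclideanSpace.single j (1:ℝ)))
        = fun y : EuclideanSpace ℝ (Fin n) =>
            M * y e ^ γ / Real.sqrt (K - Ssq e y) * y j := by
      funext y; rw [Lfn_single]; simp [hj]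
    rw [hfun]
    have ha : HasFDerivAt (fun y : EuclideanSpace ℝ (Fin n) => M * y e ^ γ)
        (M • ((γ * x e ^ (γ - 1)) •
          (EuclideanSpace.proj e : EuclideanSpace ℝ (Fin n) →L[ℝ] ℝ))) x :=
      (HasFDerivAt.rpow_const (EuclideanSpace.proj e :
        EuclideanSpace ℝ (Fin n) →L[ℝ] ℝ).hasFDerivAt (Or.inl htne)).const_mul _
    have hinv : HasFDerivAt
        (fun y : EuclideanSpace ℝ (Fin n) => (Real.sqrt (K - Ssq e y))⁻¹)
        ((-(Real.sqrt (K - Ssq e x) ^ 2)⁻¹) •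
          ((1 / (2 * Real.sqrt (K - Ssq e x))) • -((2:ℝ) • DS e x))) x :=
      (hasDerivAt_inv hr).comp_hasFDerivAt x (hasFDerivAt_sqrtpart e K x hs)
    have hab := ha.mul hinv
    have hG : HasFDerivAt (fun y : EuclideanSpace ℝ (Fin n) =>
        M * y e ^ γ / Real.sqrt (K - Ssq e y) * y j) _ x :=
      hab.mul (EuclideanSpace.proj j :
        EuclideanSpace ℝ (Fin n) →L[ℝ] ℝ).hasFDerivAt
    rw [hG.fderiv]
    have hxp : x e ^ γ = x e ^ (γ - 1) * x e := by
      rw [Real.rpow_sub ht γ 1, Real.rpow_one]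
      field_simp
    simp only [ContinuousLinearMap.add_apply, ContinuousLinearMap.coe_smul', Pi.smul_apply,
      ContinuousLinearMap.neg_apply, smul_eq_mul, DS_single, PiLp.proj_apply,
      EuclideanSpace.single_apply, Hent, if_neg hj, Pi.mul_apply, ↓reduceIte]
    rw [hxp]
    set r := Real.sqrt (K - Ssq e x) with hrdef
    by_cases hi : i = e
    · simp only [hi, if_pos rfl, if_neg (show ¬ e = j from fun h => hj h.symm),
        if_neg (show ¬ j = e from hj), ↓reduceIte]
      field_simp
      ring
    · simp only [if_neg hi, if_neg (show ¬ e = i from fun h => hi h.symm), ↓reduceIte]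
      by_cases hij : i = j
      · simp only [hij, if_pos rfl, ↓reduceIte]
        field_simp
        ring
      · simp only [if_neg hij, if_neg (show ¬ j = i from fun h => hij h.symm), ↓reduceIte]
        field_simp
        ring

lemma det_skeleton (hn : 2 ≤ n) (e : Fin n) (w : Fin n → ℝ) (δ k d : ℝ)
    (hδ : δ ≠ 0) :
    (Matrix.of fun i j : Fin n =>
      (if i = j then δ else 0) + (k * w i * w j
        + (if i = e then (1:ℝ) else 0) * (if j = e then d - δ else 0))).det
    = δ ^ (n - 2) * (d * δ + d * k * (∑ j ∈ Finset.univ.erase e, w j * w j)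
        + δ * k * (w e * w e)) := by
  set U : Matrix (Fin n) (Fin 2) ℝ :=
    Matrix.of fun i c => if c = 0 then k * w i else (if i = e then (1:ℝ) else 0) with hU
  set V : Matrix (Fin 2) (Fin n) ℝ :=
    Matrix.of fun c j => if c = 0 then w j else (if j = e then d - δ else 0) with hV
  have hmat : (Matrix.of fun i j : Fin n =>
      (if i = j then δ else 0) + (k * w i * w j
        + (if i = e then (1:ℝ) else 0) * (if j = e then d - δ else 0)))
      = δ • (1 : Matrix (Fin n) (Fin n) ℝ) + U * V := by
    ext i j
    simp only [Matrix.of_apply, Matrix.add_apply, Matrix.smul_apply, Matrix.one_apply,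
      Matrix.mul_apply, Fin.sum_univ_two, hU, hV, smul_eq_mul, mul_ite, mul_zero, mul_one,
      if_true, if_false, (by decide : ¬(1:Fin 2) = 0), ite_true, ite_false]
  have h2 : δ • (1 : Matrix (Fin n) (Fin n) ℝ) + U * V = δ • (1 + (δ⁻¹ • U) * V) := by
    rw [smul_add, Matrix.smul_mul, smul_smul, mul_inv_cancel₀ hδ, one_smul]
  rw [hmat, h2, Matrix.det_smul, Matrix.det_one_add_mul_comm, Matrix.det_fin_two]
  simp only [Matrix.add_apply, Matrix.mul_apply, Matrix.smul_apply, Matrix.one_apply,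
    hU, hV, Matrix.of_apply, smul_eq_mul, mul_ite, mul_zero, mul_one,
    (by decide : ¬(1:Fin 2) = 0), ite_true, ite_false, if_true, if_false,
    ite_mul, zero_mul, Finset.sum_ite_eq', Finset.mem_univ, Fintype.card_fin,
    (by decide : ¬(0:Fin 2) = 1)]
  have hsum : ∑ j : Fin n, w j * (δ⁻¹ * (k * w j))
      = δ⁻¹ * k * ((∑ j ∈ Finset.univ.erase e, w j * w j) + w e * w e) := by
    rw [← Finset.sum_erase_add _ _ (Finset.mem_univ e)]
    have h1 : ∑ j ∈ Finset.univ.erase e, w j * (δ⁻¹ * (k * w j))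
        = δ⁻¹ * k * ∑ j ∈ Finset.univ.erase e, (w j * w j) := by
      rw [Finset.mul_sum]
      exact Finset.sum_congr rfl fun j _ => by ring
    rw [h1]
    ring
  rw [hsum]
  have hpow : δ ^ n = δ ^ (n - 2) * δ ^ 2 := by
    rw [← pow_add]
    congr 1
    omega
  rw [hpow]
  field_simp
  ring

lemma det_Hent (hn : 2 ≤ n) (e : Fin n) (M γ K : ℝ) (x : EuclideanSpace ℝ (Fin n))
    (hM : 0 < M) (ht : 0 < x e) (hs : 0 < K - Ssq e x) :
    (Matrix.of fun i j => Hent e M γ K x i j).det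
      = (M * x e ^ (γ - 1) * x e / Real.sqrt (K - Ssq e x)) ^ (n - 2)
        * ((M * x e ^ (γ - 1)) ^ 2 * γ
          * (γ * Real.sqrt (K - Ssq e x) ^ 2
            - (2 * γ - 1) * (Real.sqrt (K - Ssq e x) ^ 2 + Ssq e x))
          / Real.sqrt (K - Ssq e x) ^ 2) := by
  have hp0 : 0 < x e ^ (γ - 1) := Real.rpow_pos_of_pos ht _
  have hr0 : 0 < Real.sqrt (K - Ssq e x) := Real.sqrt_pos.mpr hs
  have htne : x e ≠ 0 := ht.ne'
  unfold Hent
  set S := Ssq e x with hSdef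
  set r := Real.sqrt (K - S) with hrdef
  set p := x e ^ (γ - 1) with hpdef
  set t := x e with htdef
  have hrne : r ≠ 0 := hr0.ne'
  have hpne : p ≠ 0 := hp0.ne'
  have hδ : M * p * t / r ≠ 0 := by positivity
  have hmat : (Matrix.of fun i j : Fin n =>
      if j = e then
        (if i = e then -(M * γ) * (γ - 1) * (p / t) * r
         else M * γ * p * x i / r)
      else
        (if i = e then M * γ * p * x j / r
         else M * p * t * ((if i = j then 1 else 0) / r + x i * x j / r ^ 3)))
      = Matrix.of fun i j : Fin n =>
        (if i = j then M * p * t / r else 0)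
        + ((M * p * t / r ^ 3)
            * (fun i => if i = e then γ * r ^ 2 / t else x i) i
            * (fun i => if i = e then γ * r ^ 2 / t else x i) j
          + (if i = e then (1:ℝ) else 0) *
            (if j = e then (-(M * γ) * (2 * γ - 1) * (p / t) * r)
              - M * p * t / r else 0)) := by
    ext i j
    simp only [Matrix.of_apply]
    by_cases hj : j = e <;> by_cases hi : i = e
    · simp only [hj, hi, if_pos rfl, ↓reduceIte]
      field_simp
      ring
    · simp only [hj, if_pos rfl, if_neg hi, ↓reduceIte]
      field_simp
      ring
    · simp only [hi, if_pos rfl, if_neg hj,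
        if_neg (show ¬ e = j from fun h => hj h.symm), ↓reduceIte]
      field_simp
      ring
    · simp only [if_neg hj, if_neg hi, ↓reduceIte]
      by_cases hij : i = j
      · simp only [hij, if_pos rfl, if_neg hj, ↓reduceIte]
        field_simp
        ring
      · simp only [if_neg hij, if_neg hj, if_neg hi, ↓reduceIte]
        field_simp
        ring
  rw [hmat, det_skeleton hn e _ _ _ _ hδ]
  have hw : (∑ j ∈ Finset.univ.erase e,
      (fun i => if i = e then γ * r ^ 2 / t else x i) j
        * (fun i => if i = e then γ * r ^ 2 / t else x i) j)
      = S := by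
    rw [hSdef, Ssq]
    refine Finset.sum_congr rfl fun j hj => ?_
    simp only [if_neg (Finset.ne_of_mem_erase hj), ↓reduceIte]
    ring
  rw [hw]
  simp only [if_pos rfl, ↓reduceIte]
  congr 1
  field_simp
  ring

lemma main_aux (hn : 2 ≤ n) (e : Fin n) (M N l γ : ℝ) (hM : 0 < M) (hN : 0 < N)
    (hl : 0 < l) (hγ : 0 < γ) (x : EuclideanSpace ℝ (Fin n))
    (hx : 0 < x e) (hx' : Real.sqrt (Ssq e x) < N * l) :
    hessianDet (Wfn e M γ (N ^ 2 * l ^ 2)) x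
      = M ^ n * N ^ 2 * l ^ 2 * γ * x e ^ ((n : ℝ) * γ - 2) *
          (N ^ 2 * l ^ 2 - Ssq e x) ^ (-(n : ℝ) / 2) *
          (1 - (1 + Ssq e x / (N ^ 2 * l ^ 2)) * γ) := by
  have hK : (0:ℝ) < N ^ 2 * l ^ 2 := by positivity
  have hS0 : 0 ≤ Ssq e x := Finset.sum_nonneg fun j _ => sq_nonneg _
  have hs : 0 < N ^ 2 * l ^ 2 - Ssq e x := by
    have h2 : Ssq e x < (N * l) ^ 2 := (Real.sqrt_lt' (by positivity)).mp hx'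
    nlinarith
  have hmx : hessianDet (Wfn e M γ (N ^ 2 * l ^ 2)) x
      = (Matrix.of fun i j => Hent e M γ (N ^ 2 * l ^ 2) x i j).det := by
    unfold hessianDet
    congr 1
    funext i j
    exact entry e M γ (N ^ 2 * l ^ 2) x hx hs i j
  rw [hmx, det_Hent hn e M γ _ x hM hx hs]
  have hr0 : 0 < Real.sqrt (N ^ 2 * l ^ 2 - Ssq e x) := Real.sqrt_pos.mpr hs
  have hrne : Real.sqrt (N ^ 2 * l ^ 2 - Ssq e x) ≠ 0 := hr0.ne'
  have hr2 : Real.sqrt (N ^ 2 * l ^ 2 - Ssq e x) ^ 2 = N ^ 2 * l ^ 2 - Ssq e x :=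
    Real.sq_sqrt hs.le
  have htne : x e ≠ 0 := hx.ne'
  set S := Ssq e x with hSdef
  set Kv := N ^ 2 * l ^ 2 with hKdef
  set r := Real.sqrt (Kv - S) with hrdef
  set t := x e with htdef
  -- bracket identity
  have hbr : γ * r ^ 2 - (2 * γ - 1) * (r ^ 2 + S) = Kv * (1 - (1 + S / Kv) * γ) := by
    rw [hr2]; field_simp; ring
  rw [hbr]
  -- power conversions
  have e1 : (M * t ^ (γ - 1) * t / r) ^ (n - 2)
      = M ^ (n - 2) * (t ^ (γ - 1)) ^ (n - 2) * t ^ (n - 2) / r ^ (n - 2) := by ring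
  have e2 : (t ^ (γ - 1)) ^ (n - 2) = t ^ ((γ - 1) * ((n : ℝ) - 2)) := by
    rw [← Real.rpow_natCast (t ^ (γ - 1)) (n - 2), ← Real.rpow_mul hx.le]
    congr 1
    rw [Nat.cast_sub hn]
    norm_num
  have e3 : (t : ℝ) ^ (n - 2 : ℕ) = t ^ ((n : ℝ) - 2) := by
    rw [← Real.rpow_natCast t (n - 2)]
    congr 1
    rw [Nat.cast_sub hn]
    norm_num
  have e4 : (M * t ^ (γ - 1)) ^ 2 = M ^ 2 * t ^ ((γ - 1) * 2) := by
    rw [mul_pow, ← Real.rpow_natCast (t ^ (γ - 1)) 2, ← Real.rpow_mul hx.le]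
    norm_num
  rw [e1, e2, e3, e4]
  -- RHS conversions
  have e5 : (Kv - S) ^ (-(n : ℝ) / 2) = (r ^ n)⁻¹ := by
    rw [show (-(n : ℝ) / 2) = -((n : ℝ) / 2) by ring, Real.rpow_neg hs.le]
    congr 1
    rw [hrdef, Real.sqrt_eq_rpow, ← Real.rpow_natCast ((Kv - S) ^ ((1:ℝ)/2)) n,
      ← Real.rpow_mul hs.le]
    congr 1
    ring
  rw [e5]
  have e6 : M ^ n = M ^ (n - 2) * M ^ 2 := by
    rw [← pow_add]
    congr 1
    omega
  have e7 : t ^ ((n : ℝ) * γ - 2)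
      = t ^ ((γ - 1) * ((n : ℝ) - 2)) * t ^ ((n : ℝ) - 2) * t ^ ((γ - 1) * 2) := by
    rw [← Real.rpow_add hx, ← Real.rpow_add hx]
    congr 1
    ring
  have e8 : (r : ℝ) ^ n = r ^ (n - 2) * r ^ 2 := by
    rw [← pow_add]
    congr 1
    omega
  rw [e6, e7, e8]
  have hKne : Kv ≠ 0 := hK.ne'
  field_simp
  ring

end HessAux

/-- Formula (2.5): the Hessian determinant of
`W(x) = -M xₙ^γ √(N²l² - |x'|²)` at points where `xₙ > 0` and `|x'| < N l`. -/
theorem hessianDet_subsolution_candidate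
    (n : ℕ) (hn : 2 ≤ n) (M N l γ : ℝ) (hM : 0 < M) (hN : 0 < N) (hl : 0 < l)
    (hγ : 0 < γ) :
    ∀ x : EuclideanSpace ℝ (Fin n),
      0 < x (lastIdx n (by omega)) →
      Real.sqrt (∑ j ∈ Finset.univ.erase (lastIdx n (by omega)), x j ^ 2) < N * l →
      hessianDet
          (fun y : EuclideanSpace ℝ (Fin n) =>
            -M * y (lastIdx n (by omega)) ^ γ *
              Real.sqrt
                (N ^ 2 * l ^ 2 - ∑ j ∈ Finset.univ.erase (lastIdx n (by omega)), y j ^ 2)) x =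
        M ^ n * N ^ 2 * l ^ 2 * γ * x (lastIdx n (by omega)) ^ ((n : ℝ) * γ - 2) *
          (N ^ 2 * l ^ 2 - ∑ j ∈ Finset.univ.erase (lastIdx n (by omega)), x j ^ 2) ^
            (-(n : ℝ) / 2) *
          (1 - (1 + (∑ j ∈ Finset.univ.erase (lastIdx n (by omega)), x j ^ 2) /
            (N ^ 2 * l ^ 2)) * γ) := by
  intro x hx hx'
  exact main_aux hn (lastIdx n (by omega)) M N l γ hM hN hl hγ x hx hx'
end

section
/- Let a ≥ 1, b > 0, ε > 0 and n ≥ 2, and define W(x) = −((x_n/ε)^{2/a} − |x'|²)^{1/b} on the region where x_n > 0 and (x_n/ε)^{2/a} > |x'|². Writing r = |x'| and denoting by W_{rr}, W_{rn}, W_{nn} the second partial derivatives of W with respect to r and x_n (viewing W as a function of (r, x_n)), at every point of this region one has W_{rr}·W_{nn} − (W_{rn})² = (8(a−2)(b−1)/(a²b³))·|W|^{2−3b}·(x_n/ε)^{2/a−2}·r²·ε^{−2} + (8(b−1)/(a²b³))·|W|^{2−3b}·(x_n/ε)^{4/a−2}·ε^{−2} + (4(a−2)/(a²b²))·|W|^{2−2b}·(x_n/ε)^{2/a−2}·ε^{−2}.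 -/
open Real Filter Topology

lemma auxR1 (c b : ℝ) {x : ℝ} (hx : x ^ 2 < c) :
    HasDerivAt (fun r' : ℝ => -((c - r' ^ 2) ^ ((1:ℝ) / b)))
      (2 * x / b * (c - x ^ 2) ^ ((1:ℝ) / b - 1)) x := by
  have hu : (0:ℝ) < c - x ^ 2 := sub_pos.mpr hx
  have h1 : HasDerivAt (fun r' : ℝ => c - r' ^ 2) (-(2 * x)) x := by
    simpa using (hasDerivAt_pow 2 x).const_sub c
  have h2 := (h1.rpow_const (p := 1 / b) (Or.inl hu.ne')).neg
  refine h2.congr_deriv ?_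
  ring

lemma auxR2 (c b : ℝ) {x : ℝ} (hx : x ^ 2 < c) :
    HasDerivAt (fun r' : ℝ => 2 * r' / b * (c - r' ^ 2) ^ ((1:ℝ) / b - 1))
      (2 / b * (c - x ^ 2) ^ ((1:ℝ) / b - 1)
        - 4 * x ^ 2 / b * (1 / b - 1) * (c - x ^ 2) ^ ((1:ℝ) / b - 2)) x := by
  have hu : (0:ℝ) < c - x ^ 2 := sub_pos.mpr hx
  have h1 : HasDerivAt (fun r' : ℝ => 2 * r' / b) (2 / b) x := by
    simpa using ((hasDerivAt_id x).const_mul 2).div_const b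
  have h0 : HasDerivAt (fun r' : ℝ => c - r' ^ 2) (-(2 * x)) x := by
    simpa using (hasDerivAt_pow 2 x).const_sub c
  have h2 := h0.rpow_const (p := (1:ℝ) / b - 1) (Or.inl hu.ne')
  rw [show (1:ℝ)/b - 1 - 1 = 1/b - 2 by ring] at h2
  have h3 := h1.mul h2
  refine h3.congr_deriv ?_
  ring

lemma auxQ (ε p r2 : ℝ) (hε : 0 < ε) {x : ℝ} (hx : 0 < x) :
    HasDerivAt (fun t : ℝ => (t / ε) ^ p - r2) (1 / ε * p * (x / ε) ^ (p - 1)) x := by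
  have h0 : HasDerivAt (fun t : ℝ => t / ε) (1 / ε) x := by
    simpa using (hasDerivAt_id x).div_const ε
  exact (h0.rpow_const (Or.inl (div_pos hx hε).ne')).sub_const r2
lemma auxS1 (ε p b r2 : ℝ) (hε : 0 < ε) {x : ℝ} (hx : 0 < x)
    (hx2 : r2 < (x / ε) ^ p) :
    HasDerivAt (fun s' : ℝ => -(((s' / ε) ^ p - r2) ^ ((1:ℝ) / b)))
      (-(1 / ε * p * (x / ε) ^ (p - 1) * (1 / b) *
        ((x / ε) ^ p - r2) ^ ((1:ℝ) / b - 1))) x := by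
  have hu : (0:ℝ) < (x / ε) ^ p - r2 := sub_pos.mpr hx2
  exact ((auxQ ε p r2 hε hx).rpow_const (Or.inl hu.ne')).neg

lemma auxS2 (ε p b r2 : ℝ) (hε : 0 < ε) {x : ℝ} (hx : 0 < x)
    (hx2 : r2 < (x / ε) ^ p) :
    HasDerivAt (fun s' : ℝ =>
        -(1 / ε * p * (s' / ε) ^ (p - 1) * (1 / b) *
          ((s' / ε) ^ p - r2) ^ ((1:ℝ) / b - 1)))
      ((-(1 / b)) * (1 / ε * p * (1 / ε * (p - 1) * (x / ε) ^ (p - 2)) *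
            ((x / ε) ^ p - r2) ^ ((1:ℝ) / b - 1)
          + (1 / b - 1) * (1 / ε * p * (x / ε) ^ (p - 1)) ^ 2 *
            ((x / ε) ^ p - r2) ^ ((1:ℝ) / b - 2))) x := by
  have hu : (0:ℝ) < (x / ε) ^ p - r2 := sub_pos.mpr hx2
  have h0 : HasDerivAt (fun t : ℝ => t / ε) (1 / ε) x := by
    simpa using (hasDerivAt_id x).div_const ε
  have hA : HasDerivAt (fun s' : ℝ => 1 / ε * p * (s' / ε) ^ (p - 1))
      (1 / ε * p * (1 / ε * (p - 1) * (x / ε) ^ (p - 2))) x := by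
    have := (h0.rpow_const (p := p - 1) (Or.inl (div_pos hx hε).ne')).const_mul (1 / ε * p)
    rwa [show p - 1 - 1 = p - 2 by ring] at this
  have hB := (auxQ ε p r2 hε hx).rpow_const (p := (1:ℝ) / b - 1) (Or.inl hu.ne')
  rw [show (1:ℝ)/b - 1 - 1 = 1/b - 2 by ring] at hB
  have hfun : (fun s' : ℝ =>
        -(1 / ε * p * (s' / ε) ^ (p - 1) * (1 / b) *
          ((s' / ε) ^ p - r2) ^ ((1:ℝ) / b - 1)))
      = fun s' : ℝ => (-(1 / b)) * ((1 / ε * p * (s' / ε) ^ (p - 1)) *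
          ((s' / ε) ^ p - r2) ^ ((1:ℝ) / b - 1)) := by
    funext z; ring
  rw [hfun]
  have h3 := (hA.mul hB).const_mul (-(1 / b))
  refine h3.congr_deriv ?_
  ring

lemma auxS3 (ε p b r2 c0 : ℝ) (hε : 0 < ε) {x : ℝ} (hx : 0 < x)
    (hx2 : r2 < (x / ε) ^ p) :
    HasDerivAt (fun s' : ℝ => c0 * ((s' / ε) ^ p - r2) ^ ((1:ℝ) / b - 1))
      (c0 * (1 / ε * p * (x / ε) ^ (p - 1) * ((1:ℝ) / b - 1) *
        ((x / ε) ^ p - r2) ^ ((1:ℝ) / b - 2))) x := by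
  have hu : (0:ℝ) < (x / ε) ^ p - r2 := sub_pos.mpr hx2
  have hB := (auxQ ε p r2 hε hx).rpow_const (p := (1:ℝ) / b - 1) (Or.inl hu.ne')
  rw [show (1:ℝ)/b - 1 - 1 = 1/b - 2 by ring] at hB
  exact hB.const_mul c0



/-- Formula (3.6): for `W(r,s) = -((s/ε)^{2/a} - r²)^{1/b}` (with `r = |x'|`, `s = xₙ`),
the expression `W_{rr} W_{nn} - W_{rn}²` at points of the region `s > 0`,
`(s/ε)^{2/a} > r²`. -/
theorem radial_second_derivative_identity
    (n : ℕ) (hn : 2 ≤ n) (a b ε : ℝ) (ha : 1 ≤ a) (hb : 0 < b) (hε : 0 < ε) :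
    ∀ r s : ℝ, 0 ≤ r → 0 < s → r ^ 2 < (s / ε) ^ (2 / a) →
      iteratedDeriv 2 (fun r' : ℝ => -(((s / ε) ^ (2 / a) - r' ^ 2) ^ (1 / b))) r *
          iteratedDeriv 2 (fun s' : ℝ => -(((s' / ε) ^ (2 / a) - r ^ 2) ^ (1 / b))) s -
        (deriv (fun s' : ℝ =>
            deriv (fun r' : ℝ => -(((s' / ε) ^ (2 / a) - r' ^ 2) ^ (1 / b))) r) s) ^ 2 =
      8 * (a - 2) * (b - 1) / (a ^ 2 * b ^ 3) *
          (((s / ε) ^ (2 / a) - r ^ 2) ^ (1 / b)) ^ (2 - 3 * b) *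
          (s / ε) ^ (2 / a - 2) * r ^ 2 * (1 / ε) ^ 2 +
        8 * (b - 1) / (a ^ 2 * b ^ 3) *
          (((s / ε) ^ (2 / a) - r ^ 2) ^ (1 / b)) ^ (2 - 3 * b) *
          (s / ε) ^ (4 / a - 2) * (1 / ε) ^ 2 +
        4 * (a - 2) / (a ^ 2 * b ^ 2) *
          (((s / ε) ^ (2 / a) - r ^ 2) ^ (1 / b)) ^ (2 - 2 * b) *
          (s / ε) ^ (2 / a - 2) * (1 / ε) ^ 2 := by
  intro r s hr hs hrs
  have ha0 : (0:ℝ) < a := lt_of_lt_of_le one_pos ha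
  have ht : (0:ℝ) < s / ε := div_pos hs hε
  have hu : (0:ℝ) < (s / ε) ^ (2 / a) - r ^ 2 := sub_pos.mpr hrs
  -- W_rr
  have hWrr : iteratedDeriv 2 (fun r' : ℝ => -(((s / ε) ^ (2 / a) - r' ^ 2) ^ (1 / b))) r
      = 2 / b * ((s / ε) ^ (2 / a) - r ^ 2) ^ ((1:ℝ) / b - 1)
        - 4 * r ^ 2 / b * (1 / b - 1) * ((s / ε) ^ (2 / a) - r ^ 2) ^ ((1:ℝ) / b - 2) := by
    rw [iteratedDeriv_succ, iteratedDeriv_one]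
    have hopen : IsOpen {x : ℝ | x ^ 2 < (s / ε) ^ (2 / a)} :=
      isOpen_lt (continuous_pow 2) continuous_const
    have hev : deriv (fun r' : ℝ => -(((s / ε) ^ (2 / a) - r' ^ 2) ^ (1 / b)))
        =ᶠ[𝓝 r] fun x : ℝ => 2 * x / b * ((s / ε) ^ (2 / a) - x ^ 2) ^ ((1:ℝ) / b - 1) := by
      filter_upwards [hopen.mem_nhds hrs] with x hx
      exact (auxR1 _ b hx).deriv
    rw [hev.deriv_eq]
    exact (auxR2 _ b hrs).deriv
  -- eventual facts near s
  have hcont : ContinuousAt (fun s' : ℝ => (s' / ε) ^ (2 / a)) s := by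
    have h1 : ContinuousAt (fun s' : ℝ => s' / ε) s := (continuous_id.div_const ε).continuousAt
    exact h1.rpow_const (Or.inl ht.ne')
  have hev1 : ∀ᶠ x in 𝓝 s, r ^ 2 < (x / ε) ^ (2 / a) := by
    have h2 : Set.Ioi (r ^ 2) ∈ 𝓝 ((s / ε) ^ (2 / a)) := isOpen_Ioi.mem_nhds hrs
    exact hcont.eventually_mem h2
  have hev0 : ∀ᶠ x in 𝓝 s, 0 < x := eventually_gt_nhds hs
  -- W_ss
  have hWss : iteratedDeriv 2 (fun s' : ℝ => -(((s' / ε) ^ (2 / a) - r ^ 2) ^ (1 / b))) s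
      = -(1 / b) * (1 / ε * (2 / a) * (1 / ε * (2 / a - 1) * (s / ε) ^ (2 / a - 2)) *
            ((s / ε) ^ (2 / a) - r ^ 2) ^ ((1:ℝ) / b - 1)
          + (1 / b - 1) * (1 / ε * (2 / a) * (s / ε) ^ (2 / a - 1)) ^ 2 *
            ((s / ε) ^ (2 / a) - r ^ 2) ^ ((1:ℝ) / b - 2)) := by
    rw [iteratedDeriv_succ, iteratedDeriv_one]
    have hev : deriv (fun s' : ℝ => -(((s' / ε) ^ (2 / a) - r ^ 2) ^ (1 / b)))
        =ᶠ[𝓝 s] fun x : ℝ => -(1 / ε * (2 / a) * (x / ε) ^ (2 / a - 1) * (1 / b) *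
          ((x / ε) ^ (2 / a) - r ^ 2) ^ ((1:ℝ) / b - 1)) := by
      filter_upwards [hev0, hev1] with x hx0 hx1
      exact (auxS1 ε (2 / a) b (r ^ 2) hε hx0 hx1).deriv
    rw [hev.deriv_eq]
    exact (auxS2 ε (2 / a) b (r ^ 2) hε hs hrs).deriv
  -- W_rs
  have hWrs : deriv (fun s' : ℝ =>
        deriv (fun r' : ℝ => -(((s' / ε) ^ (2 / a) - r' ^ 2) ^ (1 / b))) r) s
      = 2 * r / b * (1 / ε * (2 / a) * (s / ε) ^ (2 / a - 1) * ((1:ℝ) / b - 1) *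
          ((s / ε) ^ (2 / a) - r ^ 2) ^ ((1:ℝ) / b - 2)) := by
    have hev : (fun s' : ℝ =>
          deriv (fun r' : ℝ => -(((s' / ε) ^ (2 / a) - r' ^ 2) ^ (1 / b))) r)
        =ᶠ[𝓝 s] fun x : ℝ => 2 * r / b * (((x / ε) ^ (2 / a) - r ^ 2) ^ ((1:ℝ) / b - 1)) := by
      filter_upwards [hev1] with x hx1
      exact (auxR1 ((x / ε) ^ (2 / a)) b hx1).deriv
    rw [hev.deriv_eq]
    exact (auxS3 ε (2 / a) b (r ^ 2) (2 * r / b) hε hs hrs).deriv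
  rw [hWrr, hWss, hWrs]
  have hApos : (0:ℝ) < ((s / ε) ^ (2 / a) - r ^ 2) ^ ((1:ℝ) / b) := rpow_pos_of_pos hu _
  have e1 : ((s / ε) ^ (2 / a) - r ^ 2) ^ ((1:ℝ) / b - 1)
      = ((s / ε) ^ (2 / a) - r ^ 2) ^ ((1:ℝ) / b) / ((s / ε) ^ (2 / a) - r ^ 2) := by
    rw [Real.rpow_sub hu, Real.rpow_one]
  have e2 : ((s / ε) ^ (2 / a) - r ^ 2) ^ ((1:ℝ) / b - 2)
      = ((s / ε) ^ (2 / a) - r ^ 2) ^ ((1:ℝ) / b) / ((s / ε) ^ (2 / a) - r ^ 2) ^ 2 := by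
    rw [Real.rpow_sub hu, Real.rpow_two]
  have e3 : (s / ε) ^ (2 / a - 1) = (s / ε) ^ (2 / a) / (s / ε) := by
    rw [Real.rpow_sub ht, Real.rpow_one]
  have e4 : (s / ε) ^ (2 / a - 2) = (s / ε) ^ (2 / a) / (s / ε) ^ 2 := by
    rw [Real.rpow_sub ht, Real.rpow_two]
  have e8 : (s / ε) ^ (4 / a - 2) = ((s / ε) ^ (2 / a)) ^ 2 / (s / ε) ^ 2 := by
    rw [Real.rpow_sub ht, show (4:ℝ) / a = 2 / a + 2 / a by ring, Real.rpow_add ht,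
      Real.rpow_two]
    ring
  have key3 : (((s / ε) ^ (2 / a) - r ^ 2) ^ ((1:ℝ) / b)) ^ ((3:ℝ) * b)
      = ((s / ε) ^ (2 / a) - r ^ 2) ^ 3 := by
    rw [← Real.rpow_mul hu.le, show 1 / b * (3 * b) = (3:ℝ) by field_simp,
      show (3:ℝ) = ((3:ℕ):ℝ) by norm_num, Real.rpow_natCast]
  have key2 : (((s / ε) ^ (2 / a) - r ^ 2) ^ ((1:ℝ) / b)) ^ ((2:ℝ) * b)
      = ((s / ε) ^ (2 / a) - r ^ 2) ^ 2 := by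
    rw [← Real.rpow_mul hu.le, show 1 / b * (2 * b) = (2:ℝ) by field_simp, Real.rpow_two]
  have e5 : (((s / ε) ^ (2 / a) - r ^ 2) ^ ((1:ℝ) / b)) ^ (2 - 3 * b)
      = (((s / ε) ^ (2 / a) - r ^ 2) ^ ((1:ℝ) / b)) ^ 2
        / ((s / ε) ^ (2 / a) - r ^ 2) ^ 3 := by
    rw [eq_div_iff (pow_ne_zero 3 hu.ne'), ← key3, ← Real.rpow_add hApos,
      show 2 - 3 * b + 3 * b = (2:ℝ) by ring, Real.rpow_two]
  have e6 : (((s / ε) ^ (2 / a) - r ^ 2) ^ ((1:ℝ) / b)) ^ (2 - 2 * b)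
      = (((s / ε) ^ (2 / a) - r ^ 2) ^ ((1:ℝ) / b)) ^ 2
        / ((s / ε) ^ (2 / a) - r ^ 2) ^ 2 := by
    rw [eq_div_iff (pow_ne_zero 2 hu.ne'), ← key2, ← Real.rpow_add hApos,
      show 2 - 2 * b + 2 * b = (2:ℝ) by ring, Real.rpow_two]
  rw [e1, e2, e3, e4, e5, e6, e8]
  field_simp
  ring
end

section
/- Let n ≥ 2, M > 0, b > 0, R > 0 and y₀ ∈ ℝⁿ, and define W(x) = −M·(R² − |x − y₀|²)^b on the open ball B_R(y₀). Then at every x ∈ B_R(y₀), writing r = |x − y₀|, one has det D²W(x) = (2Mb)ⁿ·(R² − r²)^{n(b−1)−1}·(R² − (2b−1)·r²), where det D²W denotes the determinant of the Hessian matrix of W. -/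
open scoped RealInnerProductSpace

noncomputable def innerCLM (n : ℕ) :
    EuclideanSpace ℝ (Fin n) →L[ℝ] EuclideanSpace ℝ (Fin n) →L[ℝ] ℝ :=
  (isBoundedBilinearMap_inner (𝕜 := ℝ)).toContinuousLinearMap

@[simp] lemma innerCLM_apply (n : ℕ) (z w : EuclideanSpace ℝ (Fin n)) :
    innerCLM n z w = ⟪z, w⟫ := rfl

-- derivative of G y = c y • innerCLM (y - y₀)
lemma aux2 (n : ℕ) (M b R : ℝ) (y₀ x : EuclideanSpace ℝ (Fin n))
    (hs : R ^ 2 - ‖x - y₀‖ ^ 2 ≠ 0) :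
    HasFDerivAt (fun y : EuclideanSpace ℝ (Fin n) =>
        (2 * M * b * (R ^ 2 - ‖y - y₀‖ ^ 2) ^ (b - 1)) • innerCLM n (y - y₀))
      ((2 * M * b * (R ^ 2 - ‖x - y₀‖ ^ 2) ^ (b - 1)) • innerCLM n
        + ((-4 * M * b * (b - 1) * (R ^ 2 - ‖x - y₀‖ ^ 2) ^ (b - 2)) •
            (innerCLM n (x - y₀))).smulRight (innerCLM n (x - y₀))) x := by
  have h1 : HasFDerivAt (fun y : EuclideanSpace ℝ (Fin n) => ‖y - y₀‖ ^ 2)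
      (2 • (innerSL ℝ (x - y₀))) x := by
    simpa using ((hasFDerivAt_id x).sub_const y₀).norm_sq
  have h2 := h1.const_sub (R ^ 2)
  have h3 : HasDerivAt (fun t : ℝ => t ^ (b - 1))
      ((b - 1) * (R ^ 2 - ‖x - y₀‖ ^ 2) ^ (b - 2)) (R ^ 2 - ‖x - y₀‖ ^ 2) := by
    have := Real.hasDerivAt_rpow_const (x := R ^ 2 - ‖x - y₀‖ ^ 2) (p := b - 1) (Or.inl hs)
    norm_num [sub_sub] at this ⊢
    exact this
  have hc := (h3.comp_hasFDerivAt x h2).const_mul (2 * M * b)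
  have hf : HasFDerivAt (fun y : EuclideanSpace ℝ (Fin n) => innerCLM n (y - y₀))
      (innerCLM n) x := by
    have := (innerCLM n).hasFDerivAt (x := x)
    have h' := this.sub_const (innerCLM n y₀)
    have : (fun y : EuclideanSpace ℝ (Fin n) => innerCLM n y - innerCLM n y₀)
        = fun y => innerCLM n (y - y₀) := by
      funext y; rw [map_sub]
    rwa [this] at h'
  have := hc.smul hf
  refine this.congr_fderiv ?_
  ext w u
  simp only [ContinuousLinearMap.add_apply, ContinuousLinearMap.smul_apply,
    ContinuousLinearMap.smulRight_apply, ContinuousLinearMap.neg_apply, innerCLM_apply,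
    innerSL_apply_apply, smul_eq_mul, Pi.smul_apply, Function.comp]
  ring

-- first derivative
lemma aux1 (n : ℕ) (M b R : ℝ) (y₀ x : EuclideanSpace ℝ (Fin n))
    (hs : R ^ 2 - ‖x - y₀‖ ^ 2 ≠ 0) :
    HasFDerivAt (fun y : EuclideanSpace ℝ (Fin n) => -M * (R ^ 2 - ‖y - y₀‖ ^ 2) ^ b)
      ((2 * M * b * (R ^ 2 - ‖x - y₀‖ ^ 2) ^ (b - 1)) • innerCLM n (x - y₀)) x := by
  have h1 : HasFDerivAt (fun y : EuclideanSpace ℝ (Fin n) => ‖y - y₀‖ ^ 2)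
      (2 • (innerSL ℝ (x - y₀))) x := by
    simpa using ((hasFDerivAt_id x).sub_const y₀).norm_sq
  have h2 := h1.const_sub (R ^ 2)
  have h3 : HasDerivAt (fun t : ℝ => t ^ b)
      (b * (R ^ 2 - ‖x - y₀‖ ^ 2) ^ (b - 1)) (R ^ 2 - ‖x - y₀‖ ^ 2) :=
    Real.hasDerivAt_rpow_const (Or.inl hs)
  have h4 := (h3.comp_hasFDerivAt x h2).const_mul (-M)
  refine h4.congr_fderiv ?_
  ext w
  simp [innerCLM_apply]
  ring



/-- Formula (4.4): the Hessian determinant of `W(x) = -M (R² - |x-y₀|²)^b` on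
the open ball `B_R(y₀)`. -/
theorem hessianDet_radial_power
    (n : ℕ) (hn : 2 ≤ n) (M b R : ℝ) (hM : 0 < M) (hb : 0 < b) (hR : 0 < R)
    (y₀ : EuclideanSpace ℝ (Fin n)) :
    ∀ x ∈ Metric.ball y₀ R,
      hessianDet (fun y : EuclideanSpace ℝ (Fin n) => -M * (R ^ 2 - ‖y - y₀‖ ^ 2) ^ b) x =
        (2 * M * b) ^ n * (R ^ 2 - ‖x - y₀‖ ^ 2) ^ ((n : ℝ) * (b - 1) - 1) *
          (R ^ 2 - (2 * b - 1) * ‖x - y₀‖ ^ 2) := by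
  intro x hx
  have hxn : ‖x - y₀‖ < R := by rwa [mem_ball_iff_norm] at hx
  have hs : 0 < R ^ 2 - ‖x - y₀‖ ^ 2 := by nlinarith [norm_nonneg (x - y₀)]
  -- first derivative agrees with G on the ball
  have hfd : fderiv ℝ (fun y : EuclideanSpace ℝ (Fin n) => -M * (R ^ 2 - ‖y - y₀‖ ^ 2) ^ b)
      =ᶠ[nhds x] fun y => (2 * M * b * (R ^ 2 - ‖y - y₀‖ ^ 2) ^ (b - 1)) • innerCLM n (y - y₀) := by
    filter_upwards [Metric.isOpen_ball.mem_nhds hx] with y hy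
    have hyn : ‖y - y₀‖ < R := by rwa [mem_ball_iff_norm] at hy
    have hsy : R ^ 2 - ‖y - y₀‖ ^ 2 ≠ 0 := by nlinarith [norm_nonneg (y - y₀)]
    exact (aux1 n M b R y₀ y hsy).fderiv
  have h2nd : fderiv ℝ (fderiv ℝ (fun y : EuclideanSpace ℝ (Fin n) =>
        -M * (R ^ 2 - ‖y - y₀‖ ^ 2) ^ b)) x
      = ((2 * M * b * (R ^ 2 - ‖x - y₀‖ ^ 2) ^ (b - 1)) • innerCLM n
        + ((-4 * M * b * (b - 1) * (R ^ 2 - ‖x - y₀‖ ^ 2) ^ (b - 2)) •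
            (innerCLM n (x - y₀))).smulRight (innerCLM n (x - y₀))) := by
    rw [hfd.fderiv_eq]
    exact (aux2 n M b R y₀ x hs.ne').fderiv
  set C : ℝ := 2 * M * b * (R ^ 2 - ‖x - y₀‖ ^ 2) ^ (b - 1) with hCdef
  set D : ℝ := -4 * M * b * (b - 1) * (R ^ 2 - ‖x - y₀‖ ^ 2) ^ (b - 2) with hDdef
  have hCpos : 0 < C := by
    have := Real.rpow_pos_of_pos hs (b - 1)
    positivity
  have hmat : (Matrix.of fun i j : Fin n =>
      iteratedFDeriv ℝ 2 (fun y : EuclideanSpace ℝ (Fin n) =>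
        -M * (R ^ 2 - ‖y - y₀‖ ^ 2) ^ b) x
        ![EuclideanSpace.single i (1 : ℝ), EuclideanSpace.single j (1 : ℝ)])
      = C • (1 + Matrix.replicateCol Unit (fun i => (D / C) * (x - y₀) i)
          * Matrix.replicateRow Unit (fun j => (x - y₀) j)) := by
    ext i j
    rw [Matrix.of_apply, iteratedFDeriv_two_apply, h2nd]
    simp only [Matrix.cons_val_zero, Matrix.cons_val_one, Matrix.head_cons,
      ContinuousLinearMap.add_apply, ContinuousLinearMap.smul_apply,
      ContinuousLinearMap.smulRight_apply, innerCLM_apply, smul_eq_mul,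
      Matrix.smul_apply, Matrix.add_apply, Matrix.one_apply, Matrix.mul_apply,
      Matrix.replicateCol_apply, Matrix.replicateRow_apply, Finset.sum_const, Finset.card_univ,
      Fintype.card_unit, one_smul,
      EuclideanSpace.inner_single_left, EuclideanSpace.inner_single_right,
      EuclideanSpace.single_apply, map_one, one_mul, mul_one]
    rcases eq_or_ne i j with rfl | hij
    · simp only [if_pos rfl]
      field_simp
      simp
    · simp only [if_neg hij, if_neg (Ne.symm hij)]
      field_simp
      simp
  have hnormsq : ∑ i, (x - y₀) i * (x - y₀) i = ‖x - y₀‖ ^ 2 := by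
    have := real_inner_self_eq_norm_sq (x - y₀)
    rw [← this, PiLp.inner_apply]
    simp [sq]
  rw [hessianDet, hmat, Matrix.det_smul, Matrix.det_one_add_replicateCol_mul_replicateRow]
  rw [dotProduct]
  simp only [Fintype.card_fin]
  have hsum : (∑ i, (x - y₀) i * ((D / C) * (x - y₀) i)) = (D / C) * ‖x - y₀‖ ^ 2 := by
    rw [← hnormsq, Finset.mul_sum]
    exact Finset.sum_congr rfl fun i _ => by ring
  rw [hsum]
  -- final algebra
  set t : ℝ := ‖x - y₀‖ ^ 2 with htdef
  set s : ℝ := R ^ 2 - t with hsdef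
  have h1 : s ^ (b - 1) = s ^ (b - 2) * s := by
    rw [show b - 1 = (b - 2) + 1 by ring, Real.rpow_add hs, Real.rpow_one]
  have h2 : (s ^ (b - 1)) ^ n = s ^ ((n : ℝ) * (b - 1) - 1) * s := by
    rw [← Real.rpow_natCast (s ^ (b - 1)) n, ← Real.rpow_mul hs.le,
      show (b - 1) * (n : ℝ) = ((n : ℝ) * (b - 1) - 1) + 1 by ring,
      Real.rpow_add hs, Real.rpow_one]
  have hRt : R ^ 2 - (2 * b - 1) * t = s - 2 * (b - 1) * t := by
    rw [hsdef]; ring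
  rw [hRt, hCdef, hDdef, mul_pow, mul_pow, h2, h1]
  have hs2 : s ^ (b - 2) ≠ 0 := (Real.rpow_pos_of_pos hs _).ne'
  field_simp
  ring
end

section
/- Let n ≥ 2, A > 0, α ≥ 0, R > 0, y₀ ∈ ℝⁿ, and let β satisfy n+1 ≤ β < n + α; set b = β/(n+α) ∈ (0,1). Then there exists M > 0 (depending only on A, b, R, α, n and β) such that the function W(x) = −M·(R² − |x − y₀|²)^b satisfies det D²W(x) ≥ A·(R − |x − y₀|)^{β−n−1}·|W(x)|^{−α} at every x ∈ B_R(y₀). -/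
open Real



variable {n : ℕ}

local notation "E" => EuclideanSpace ℝ (Fin n)

lemma hasFDerivAt_radial (C R p : ℝ) (y₀ y : E) (hf : 0 < R ^ 2 - ‖y - y₀‖ ^ 2) :
    HasFDerivAt (fun z : E => C * (R ^ 2 - ‖z - y₀‖ ^ 2) ^ p)
      ((-2 * C * p * (R ^ 2 - ‖y - y₀‖ ^ 2) ^ (p - 1)) • innerSL ℝ (y - y₀)) y := by
  have hQ : HasFDerivAt (fun z : E => ‖z - y₀‖ ^ 2) ((2:ℝ) • innerSL ℝ (y - y₀)) y := by
    have h := ((hasFDerivAt_id y).sub_const y₀).inner ℝ ((hasFDerivAt_id y).sub_const y₀)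
    have heq : (fun z : E => ‖z - y₀‖ ^ 2) = fun z : E => (inner ℝ (z - y₀) (z - y₀) : ℝ) := by
      funext z; rw [real_inner_self_eq_norm_sq]
    rw [heq]
    refine h.congr_fderiv (Eq.symm ?_)
    refine ContinuousLinearMap.ext fun w => ?_
    simp only [ContinuousLinearMap.smul_apply, innerSL_apply_apply, ContinuousLinearMap.comp_apply,
      ContinuousLinearMap.prod_apply, fderivInnerCLM_apply, ContinuousLinearMap.id_apply,
      smul_eq_mul, id_eq]
    rw [real_inner_comm w]
    ring
  have h1 : HasFDerivAt (fun z : E => R ^ 2 - ‖z - y₀‖ ^ 2)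
      (-((2:ℝ) • innerSL ℝ (y - y₀))) y := hQ.const_sub _
  have h2 : HasDerivAt (fun t : ℝ => t ^ p) (p * (R ^ 2 - ‖y - y₀‖ ^ 2) ^ (p - 1))
      (R ^ 2 - ‖y - y₀‖ ^ 2) := Real.hasDerivAt_rpow_const (Or.inl hf.ne')
  have h3 := (h2.comp_hasFDerivAt y h1).const_mul C
  refine h3.congr_fderiv (Eq.symm ?_)
  refine ContinuousLinearMap.ext fun w => ?_
  simp only [ContinuousLinearMap.smul_apply, innerSL_apply_apply, smul_eq_mul,
    ContinuousLinearMap.neg_apply]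
  ring

lemma hessianDet_W (M R b : ℝ) (y₀ x : E) (hn : 2 ≤ n) (hx : x ∈ Metric.ball y₀ R)
    (hR : 0 < R) (hM : 0 < M) (hb0 : 0 < b) (hb1 : b < 1) :
    hessianDet (fun y : E => -M * (R ^ 2 - ‖y - y₀‖ ^ 2) ^ b) x
      = (2 * M * b * (R ^ 2 - ‖x - y₀‖ ^ 2) ^ (b - 1)) ^ (n - 1) *
        (2 * M * b * (R ^ 2 - ‖x - y₀‖ ^ 2) ^ (b - 1)
          + (4 * M * b * (1 - b) * (R ^ 2 - ‖x - y₀‖ ^ 2) ^ (b - 2)) * ‖x - y₀‖ ^ 2) := by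
  have hr : ‖x - y₀‖ < R := by
    rw [Metric.mem_ball, dist_eq_norm] at hx; exact hx
  have hf : 0 < R ^ 2 - ‖x - y₀‖ ^ 2 := by nlinarith [norm_nonneg (x - y₀)]
  set u : E → ℝ := fun y : E => -M * (R ^ 2 - ‖y - y₀‖ ^ 2) ^ b with hu
  set G : E → (E →L[ℝ] ℝ) := fun y : E =>
    (-2 * -M * b * (R ^ 2 - ‖y - y₀‖ ^ 2) ^ (b - 1)) • innerSL ℝ (y - y₀) with hG
  have key : ∀ y ∈ Metric.ball y₀ R, HasFDerivAt u (G y) y := by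
    intro y hy
    have hfy : 0 < R ^ 2 - ‖y - y₀‖ ^ 2 := by
      rw [Metric.mem_ball, dist_eq_norm] at hy
      nlinarith [norm_nonneg (y - y₀)]
    exact hasFDerivAt_radial (-M) R b y₀ y hfy
  -- derivative of the coefficient
  have hc : HasFDerivAt (fun y : E => -2 * -M * b * (R ^ 2 - ‖y - y₀‖ ^ 2) ^ (b - 1))
      ((-2 * (-2 * -M * b) * (b - 1) * (R ^ 2 - ‖x - y₀‖ ^ 2) ^ (b - 1 - 1)) •
        innerSL ℝ (x - y₀)) x :=
    hasFDerivAt_radial (-2 * -M * b) R (b - 1) y₀ x hf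
  have hTbil : IsBoundedBilinearMap ℝ (fun p : E × E => (inner ℝ p.1 p.2 : ℝ)) :=
    isBoundedBilinearMap_inner
  set T : E →L[ℝ] E →L[ℝ] ℝ := hTbil.toContinuousLinearMap with hT
  have hTapp : ∀ a e : E, T a e = (inner ℝ a e : ℝ) := fun a e => rfl
  have hF : HasFDerivAt (fun y : E => innerSL ℝ (y - y₀)) T x := by
    have hFun : (fun y : E => innerSL ℝ (y - y₀)) = fun y : E => T (y - y₀) :=
      funext fun y => ContinuousLinearMap.ext fun e => rfl
    rw [hFun]
    exact T.hasFDerivAt.comp x ((hasFDerivAt_id x).sub_const y₀)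
  have hB : HasFDerivAt G
      ((-2 * -M * b * (R ^ 2 - ‖x - y₀‖ ^ 2) ^ (b - 1)) • T
        + ((-2 * (-2 * -M * b) * (b - 1) * (R ^ 2 - ‖x - y₀‖ ^ 2) ^ (b - 1 - 1)) •
            innerSL ℝ (x - y₀)).smulRight (innerSL ℝ (x - y₀))) x := hc.smul hF
  have hfd : fderiv ℝ u =ᶠ[nhds x] G :=
    Filter.eventuallyEq_of_mem (Metric.isOpen_ball.mem_nhds hx)
      (fun y hy => (key y hy).fderiv)
  have hB' := hB.congr_of_eventuallyEq hfd
  have h2 : fderiv ℝ (fderiv ℝ u) x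
      = (-2 * -M * b * (R ^ 2 - ‖x - y₀‖ ^ 2) ^ (b - 1)) • T
        + ((-2 * (-2 * -M * b) * (b - 1) * (R ^ 2 - ‖x - y₀‖ ^ 2) ^ (b - 1 - 1)) •
            innerSL ℝ (x - y₀)).smulRight (innerSL ℝ (x - y₀)) := hB'.fderiv
  -- entries of the Hessian matrix
  set c : ℝ := 2 * M * b * (R ^ 2 - ‖x - y₀‖ ^ 2) ^ (b - 1) with hcdef
  set κ : ℝ := 4 * M * b * (1 - b) * (R ^ 2 - ‖x - y₀‖ ^ 2) ^ (b - 2) with hκdef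
  have hentry : ∀ i j : Fin n,
      iteratedFDeriv ℝ 2 u x ![EuclideanSpace.single i (1 : ℝ), EuclideanSpace.single j 1]
        = c * (if i = j then 1 else 0) + κ * (x - y₀) i * (x - y₀) j := by
    intro i j
    rw [iteratedFDeriv_two_apply, h2]
    simp only [ContinuousLinearMap.add_apply, ContinuousLinearMap.smul_apply,
      ContinuousLinearMap.smulRight_apply, innerSL_apply_apply, Matrix.cons_val_zero,
      Matrix.cons_val_one, Matrix.head_cons, smul_eq_mul]
    rw [hTapp, show b - 1 - 1 = b - 2 from by ring]
    simp only [EuclideanSpace.inner_single_right, EuclideanSpace.inner_single_left,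
      conj_trivial, one_mul, mul_one, EuclideanSpace.single_apply, hcdef, hκdef]
    rcases eq_or_ne i j with h | h
    · subst h; simp; ring
    · simp [h, Ne.symm h]; ring
  have hcpos : 0 < c := by
    have := Real.rpow_pos_of_pos hf (b - 1)
    rw [hcdef]; positivity
  have hmat : (Matrix.of fun i j : Fin n =>
        iteratedFDeriv ℝ 2 u x ![EuclideanSpace.single i (1:ℝ), EuclideanSpace.single j 1])
      = c • (1 + Matrix.replicateCol Unit (fun i => (κ / c) * (x - y₀) i)
          * Matrix.replicateRow Unit (fun j => (x - y₀) j)) := by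
    ext i j
    rw [Matrix.of_apply, hentry i j]
    simp only [Matrix.smul_apply, Matrix.add_apply, Matrix.one_apply, Matrix.mul_apply,
      Matrix.replicateCol_apply, Matrix.replicateRow_apply, Finset.univ_unique, Finset.sum_singleton,
      smul_eq_mul]
    rcases eq_or_ne i j with h | h
    · subst h; simp; field_simp
    · simp [h]; field_simp
  have hnormsq : ‖x - y₀‖ ^ 2 = ∑ i, (x - y₀) i * (x - y₀) i := by
    rw [← real_inner_self_eq_norm_sq, PiLp.inner_apply]
    simp [PiLp.inner_apply, RCLike.inner_apply, conj_trivial, sq]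
  have hdet : hessianDet u x = c ^ n * (1 + κ / c * ‖x - y₀‖ ^ 2) := by
    rw [hessianDet, hmat, Matrix.det_smul, Matrix.det_one_add_replicateCol_mul_replicateRow]
    rw [hnormsq, Finset.mul_sum]
    simp only [dotProduct, Fintype.card_fin]
    congr 1
    congr 1
    apply Finset.sum_congr rfl
    intro i _
    ring
  rw [hdet]
  have hcn : c ^ n = c ^ (n - 1) * c := by
    rw [← pow_succ, Nat.sub_add_cancel (le_trans one_le_two hn)]
  rw [hcn]
  field_simp

set_option maxHeartbeats 1000000 in
/-- For `n+1 ≤ β < n+α` and `b = β/(n+α)`, there is `M > 0` such that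
`W(x) = -M (R² - |x-y₀|²)^b` satisfies
`det D²W ≥ A (R - |x-y₀|)^{β-n-1} |W|^{-α}` on `B_R(y₀)`. -/
theorem exists_subsolution_ball
    (n : ℕ) (hn : 2 ≤ n) (A α R β b : ℝ) (hA : 0 < A) (hα : 0 ≤ α) (hR : 0 < R)
    (y₀ : EuclideanSpace ℝ (Fin n))
    (hβ : (n : ℝ) + 1 ≤ β) (hβ' : β < n + α) (hb : b = β / ((n : ℝ) + α)) :
    ∃ M : ℝ, 0 < M ∧
      ∀ x ∈ Metric.ball y₀ R,
        A * (R - ‖x - y₀‖) ^ (β - n - 1) * |-M * (R ^ 2 - ‖x - y₀‖ ^ 2) ^ b| ^ (-α)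
          ≤ hessianDet (fun y : EuclideanSpace ℝ (Fin n) =>
              -M * (R ^ 2 - ‖y - y₀‖ ^ 2) ^ b) x := by
  have hn' : (0:ℝ) < n := by positivity
  have hnα : 0 < (n:ℝ) + α := by positivity
  have hβpos : 0 < β := by linarith
  have hb0 : 0 < b := hb ▸ div_pos hβpos hnα
  have hb1 : b < 1 := by rw [hb]; exact (div_lt_one hnα).2 hβ'
  have hbβ : b * ((n:ℝ) + α) = β := by rw [hb]; field_simp
  set e : ℝ := β - n - 1 with he
  have he0 : 0 ≤ e := by simp only [he]; linarith
  set C₀ : ℝ := R ^ 2 * min 1 (2 * (1 - b)) with hC0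
  have hC0pos : 0 < C₀ := by
    have : (0:ℝ) < min 1 (2 * (1 - b)) := lt_min one_pos (by linarith)
    positivity
  set K : ℝ := (2 * b) ^ n * R ^ e * C₀ with hK
  have hKpos : 0 < K := by
    have : (0:ℝ) < R ^ e := Real.rpow_pos_of_pos hR e
    positivity
  clear_value e C₀
  refine ⟨max 1 (A / K), lt_of_lt_of_le one_pos (le_max_left _ _), ?_⟩
  set M : ℝ := max 1 (A / K) with hMdef
  have hM1 : 1 ≤ M := le_max_left _ _
  have hM : 0 < M := lt_of_lt_of_le one_pos hM1
  have hMK : A / K ≤ M := le_max_right _ _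
  clear_value M
  intro x hx
  have hr : ‖x - y₀‖ < R := by rw [Metric.mem_ball, dist_eq_norm] at hx; exact hx
  have hr0 : 0 ≤ ‖x - y₀‖ := norm_nonneg _
  set r : ℝ := ‖x - y₀‖ with hrdef
  have hf : 0 < R ^ 2 - r ^ 2 := by nlinarith
  set f : ℝ := R ^ 2 - r ^ 2 with hfdef
  rw [hessianDet_W M R b y₀ x hn hx hR hM hb0 hb1, ← hrdef, ← hfdef]
  clear_value r
  clear_value f
  -- simplify the absolute value
  have hfb : 0 < f ^ b := Real.rpow_pos_of_pos hf b
  have habs : |-M * f ^ b| = M * f ^ b := by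
    rw [abs_of_nonpos (by nlinarith)]; ring
  rw [habs]
  -- rewrite LHS
  have hLHS : A * (R - r) ^ e * (M * f ^ b) ^ (-α)
      = A * M ^ (-α) * (R - r) ^ e * f ^ (b * -α) := by
    rw [Real.mul_rpow hM.le hfb.le, ← Real.rpow_mul hf.le]
    ring
  have hRHS : (2*M*b*f^(b-1))^(n-1) * (2*M*b*f^(b-1) + 4*M*b*(1-b)*f^(b-2) * r^2)
      = ((2*b)^n * M^n * f^e * (R^2 + (1-2*b)*r^2)) * f^(b * -α) := by
    have hsplit : f ^ (b-1) = f ^ (b-2) * f := by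
      rw [show b-1 = (b-2)+1 by ring, Real.rpow_add_one hf.ne']
    have hpow : (f ^ (b-1)) ^ (n-1) = f ^ ((b-1) * ((n:ℝ)-1)) := by
      rw [← Real.rpow_natCast (f ^ (b-1)) (n-1), ← Real.rpow_mul hf.le,
        Nat.cast_sub (by omega : 1 ≤ n), Nat.cast_one]
    have hmerge : f ^ ((b-1) * ((n:ℝ)-1)) * f ^ (b-2) = f ^ e * f ^ (b * -α) := by
      rw [← Real.rpow_add hf, ← Real.rpow_add hf]
      congr 1
      rw [he, ← hbβ]; ring
    have hMbn : (2*M*b)^(n-1) * (2*M*b) = (2*b)^n * M^n := by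
      rw [← pow_succ, Nat.sub_add_cancel (by omega : 1 ≤ n),
        show 2*M*b = (2*b)*M by ring, mul_pow]
    rw [mul_pow, hpow, hsplit]
    calc (2*M*b)^(n-1) * f^((b-1)*((n:ℝ)-1))
          * (2*M*b*(f^(b-2)*f) + 4*M*b*(1-b)*f^(b-2)*r^2)
        = ((2*M*b)^(n-1) * (2*M*b)) * (f^((b-1)*((n:ℝ)-1)) * f^(b-2))
            * (f + 2*(1-b)*r^2) := by ring
      _ = ((2*b)^n * M^n) * (f^e * f^(b*(-α))) * (R^2 + (1-2*b)*r^2) := by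
          rw [hMbn, hmerge, hfdef]; ring
      _ = ((2*b)^n * M^n * f^e * (R^2 + (1-2*b)*r^2)) * f^(b * -α) := by ring
  have hG : C₀ ≤ R^2 + (1-2*b)*r^2 := by
    rcases min_cases 1 (2*(1-b)) with ⟨h1,h2⟩|⟨h1,h2⟩ <;> rw [hC0, h1] <;> nlinarith
  have hfe : (R-r)^e * R^e ≤ f^e := by
    rw [hfdef, show R^2 - r^2 = (R-r)*(R+r) by ring,
      Real.mul_rpow (by linarith) (by linarith)]
    have h1 : R ^ e ≤ (R+r) ^ e := Real.rpow_le_rpow hR.le (by linarith) he0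
    have h2 : (0:ℝ) ≤ (R-r) ^ e := Real.rpow_nonneg (by linarith) e
    exact mul_le_mul_of_nonneg_left h1 h2
  have hMα : M ^ (-α) ≤ 1 :=
    Real.rpow_le_one_of_one_le_of_nonpos hM1 (neg_nonpos.2 hα)
  have hMn : A ≤ M ^ n * K := by
    have h1 : M ≤ M ^ n := le_self_pow₀ hM1 (by omega)
    have h2 : A / K ≤ M ^ n := le_trans hMK h1
    calc A = (A / K) * K := by field_simp
      _ ≤ M ^ n * K := mul_le_mul_of_nonneg_right h2 hKpos.le
  have hRr : (0:ℝ) ≤ (R - r) ^ e := Real.rpow_nonneg (by linarith) e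
  have hmain : A * M^(-α) * (R-r)^e ≤ (2*b)^n * M^n * f^e * (R^2 + (1-2*b)*r^2) := by
    have hMnpos : (0:ℝ) < M ^ n := by positivity
    calc A * M^(-α) * (R-r)^e ≤ A * 1 * (R-r)^e := by
          have := Real.rpow_pos_of_pos hM (-α)
          gcongr
      _ = A * (R-r)^e := by ring
      _ ≤ (M^n * K) * (R-r)^e := mul_le_mul_of_nonneg_right hMn hRr
      _ = (2*b)^n * M^n * ((R-r)^e * R^e) * C₀ := by rw [hK]; ring
      _ ≤ (2*b)^n * M^n * f^e * (R^2 + (1-2*b)*r^2) := by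
          have hb2 : (0:ℝ) < (2*b)^n := by positivity
          have hRe : (0:ℝ) < R ^ e := Real.rpow_pos_of_pos hR e
          gcongr
  calc A * (R - r) ^ e * (M * f ^ b) ^ (-α)
      = (A * M ^ (-α) * (R - r) ^ e) * f ^ (b * -α) := by rw [hLHS]
    _ ≤ ((2*b)^n * M^n * f^e * (R^2 + (1-2*b)*r^2)) * f^(b * -α) :=
        mul_le_mul_of_nonneg_right hmain (Real.rpow_pos_of_pos hf _).le
    _ = (2*M*b*f^(b-1))^(n-1) * (2*M*b*f^(b-1) + 4*M*b*(1-b)*f^(b-2) * r^2) := hRHS.symm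
end

section
/- Let n ≥ 2, A > 0, α ≥ 0, R > 0, y₀ ∈ ℝⁿ, and let β satisfy β ≥ n + α + 1. Then there exists M > 0 (depending only on A, R, α, n and β) such that the function W(x) = −M·(R² − |x − y₀|²) satisfies det D²W(x) ≥ A·(R − |x − y₀|)^{β−n−1}·|W(x)|^{−α} at every x ∈ B_R(y₀). -/
open scoped RealInnerProductSpace

section
variable {n : ℕ}

noncomputable def innerB (n : ℕ) : EuclideanSpace ℝ (Fin n) →L[ℝ] EuclideanSpace ℝ (Fin n) →L[ℝ] ℝ :=
  LinearMap.mkContinuous₂ (innerₗ (EuclideanSpace ℝ (Fin n))) 1 (fun v w => by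
    simpa using abs_real_inner_le_norm v w)

@[simp] lemma innerB_apply (v w : EuclideanSpace ℝ (Fin n)) : innerB n v w = ⟪v, w⟫ := rfl

lemma hessianDet_eq (M R : ℝ) (y₀ x : EuclideanSpace ℝ (Fin n)) :
    hessianDet (fun y : EuclideanSpace ℝ (Fin n) => -M * (R ^ 2 - ‖y - y₀‖ ^ 2)) x
      = (2 * M) ^ n := by

  have hW : ∀ y : EuclideanSpace ℝ (Fin n), HasFDerivAt (fun y : EuclideanSpace ℝ (Fin n) => -M * (R ^ 2 - ‖y - y₀‖ ^ 2))
      ((2 * M) • innerB n (y - y₀)) y := by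
    intro y
    have h1 : HasFDerivAt (fun y : EuclideanSpace ℝ (Fin n) => y - y₀) (ContinuousLinearMap.id ℝ (EuclideanSpace ℝ (Fin n))) y :=
      (hasFDerivAt_id y).sub_const y₀
    have h2 := (h1.norm_sq.const_sub (R ^ 2)).const_mul (-M)
    refine h2.congr_fderiv ?_
    ext v
    simp [smul_smul]
    ring
  have hfd : (fderiv ℝ (fun y : EuclideanSpace ℝ (Fin n) => -M * (R ^ 2 - ‖y - y₀‖ ^ 2)))
      = fun y => (2 * M) • innerB n (y - y₀) := funext fun y => (hW y).fderiv
  have h2 : HasFDerivAt (fun y : EuclideanSpace ℝ (Fin n) => (2 * M) • innerB n (y - y₀)) ((2 * M) • innerB n) x := by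
    have h := (((2 * M) • innerB n).hasFDerivAt (x := id x - y₀)).comp x
      ((hasFDerivAt_id x).sub_const y₀)
    have he : (fun y : EuclideanSpace ℝ (Fin n) => (2 * M) • innerB n (y - y₀))
        = (⇑((2 * M) • innerB n)) ∘ fun y => y - y₀ := by
      funext y; simp
    rw [he]; simpa using h
  have key : ∀ i j : Fin n,
      iteratedFDeriv ℝ 2 (fun y : EuclideanSpace ℝ (Fin n) => -M * (R ^ 2 - ‖y - y₀‖ ^ 2)) x
        ![EuclideanSpace.single i (1 : ℝ), EuclideanSpace.single j (1 : ℝ)]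
      = if i = j then 2 * M else 0 := by
    intro i j
    rw [iteratedFDeriv_two_apply, hfd, h2.fderiv]
    rcases eq_or_ne i j with h | h <;>
      simp [h, innerB_apply, EuclideanSpace.inner_single_left, EuclideanSpace.single_apply, eq_comm]
  unfold hessianDet
  have : (Matrix.of fun i j : Fin n =>
      iteratedFDeriv ℝ 2 (fun y : EuclideanSpace ℝ (Fin n) => -M * (R ^ 2 - ‖y - y₀‖ ^ 2)) x
        ![EuclideanSpace.single i (1 : ℝ), EuclideanSpace.single j (1 : ℝ)])
      = Matrix.diagonal (fun _ => 2 * M) := by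
    ext i j
    rw [Matrix.of_apply, key i j, Matrix.diagonal_apply]
  rw [this, Matrix.det_diagonal]
  simp

end

/-- For `β ≥ n+α+1`, there is `M > 0` such that `W(x) = -M (R² - |x-y₀|²)` satisfies
`det D²W ≥ A (R - |x-y₀|)^{β-n-1} |W|^{-α}` on `B_R(y₀)`. -/
theorem exists_subsolution_ball_linear_case
    (n : ℕ) (hn : 2 ≤ n) (A α R β : ℝ) (hA : 0 < A) (hα : 0 ≤ α) (hR : 0 < R)
    (y₀ : EuclideanSpace ℝ (Fin n)) (hβ : (n : ℝ) + α + 1 ≤ β) :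
    ∃ M : ℝ, 0 < M ∧
      ∀ x ∈ Metric.ball y₀ R,
        A * (R - ‖x - y₀‖) ^ (β - n - 1) * |-M * (R ^ 2 - ‖x - y₀‖ ^ 2)| ^ (-α)
          ≤ hessianDet (fun y : EuclideanSpace ℝ (Fin n) =>
              -M * (R ^ 2 - ‖y - y₀‖ ^ 2)) x := by
  set e : ℝ := β - n - 1 - α with he
  have he0 : 0 ≤ e := by simp only [he]; linarith
  set M : ℝ := max 1 (A * R ^ (-α) * R ^ e) with hM
  have hM1 : (1 : ℝ) ≤ M := le_max_left _ _
  have hM0 : 0 < M := lt_of_lt_of_le one_pos hM1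
  refine ⟨M, hM0, fun x hx => ?_⟩
  rw [hessianDet_eq]
  set r : ℝ := ‖x - y₀‖ with hr
  have hr0 : 0 ≤ r := norm_nonneg _
  have hrR : r < R := by
    rw [hr, ← dist_eq_norm]; exact Metric.mem_ball.mp hx
  have hRr : 0 < R - r := by linarith
  have habs : |-M * (R ^ 2 - r ^ 2)| = M * (R ^ 2 - r ^ 2) := by
    have h1 : 0 < R ^ 2 - r ^ 2 := by nlinarith
    rw [abs_mul, abs_neg, abs_of_pos hM0, abs_of_pos h1]
  have hWlb : M * R * (R - r) ≤ M * (R ^ 2 - r ^ 2) := by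
    nlinarith [mul_nonneg (mul_nonneg hM0.le hRr.le) hr0]
  have hpos : 0 < M * R * (R - r) := by positivity
  calc A * (R - r) ^ (β - n - 1) * |-M * (R ^ 2 - r ^ 2)| ^ (-α)
      ≤ A * (R - r) ^ (β - n - 1) * (M * R * (R - r)) ^ (-α) := by
        rw [habs]
        refine mul_le_mul_of_nonneg_left
          (Real.rpow_le_rpow_of_nonpos hpos hWlb (by linarith)) (by positivity)
    _ = A * (R - r) ^ (β - n - 1) * (M ^ (-α) * (R ^ (-α) * (R - r) ^ (-α))) := by
        rw [Real.mul_rpow (by positivity) hRr.le, Real.mul_rpow hM0.le hR.le]; ring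
    _ ≤ A * (R - r) ^ (β - n - 1) * (1 * (R ^ (-α) * (R - r) ^ (-α))) := by
        refine mul_le_mul_of_nonneg_left (mul_le_mul_of_nonneg_right
          (Real.rpow_le_one_of_one_le_of_nonpos hM1 (by linarith)) (by positivity))
          (by positivity)
    _ = A * R ^ (-α) * ((R - r) ^ (β - n - 1) * (R - r) ^ (-α)) := by ring
    _ = A * R ^ (-α) * (R - r) ^ e := by
        rw [← Real.rpow_add hRr, he]; ring_nf
    _ ≤ A * R ^ (-α) * R ^ e := by
        refine mul_le_mul_of_nonneg_left
          (Real.rpow_le_rpow hRr.le (by linarith) he0) (by positivity)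
    _ ≤ M := le_max_right _ _
    _ ≤ 2 * M := by linarith
    _ ≤ (2 * M) ^ n := le_self_pow₀ (by linarith) (by omega)
end
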